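/- arXiv:1406.0690 — 6 statements merged into one kernel-verified Lean document; each statement's English description precedes it below -/
import Mathlib

section
/- Extended fooling set technique: Let L be a language over a finite alphabet Σ and let S = {(x_1,y_1), …, (x_n,y_n)} be a set of n pairs of words such that x_i y_i ∈ L for every i = 1,…,n, and such that for all i ≠ j, at least one of the two words x_i y_j and x_j y_i is not in L. Then every nondeterministic finite automaton recognizing L has at least n states. -/
/-- An accepting run of an NFA on a word `w`: a sequence of `|w|+1` states starting
in an initial state, ending in an accepting state, and following the transitions. -/
def NFA.IsAcceptingRun {α σ : Type*} (M : NFA α σ) (w : List α)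
    (r : Fin (w.length + 1) → σ) : Prop :=
  r 0 ∈ M.start ∧ r (Fin.last w.length) ∈ M.accept ∧
    ∀ i : Fin w.length, r i.succ ∈ M.step (r i.castSucc) (w.get i)

/-- An NFA is unambiguous (a UFA) if every word has at most one accepting run. -/
def NFA.Unambiguous {α σ : Type*} (M : NFA α σ) : Prop :=
  ∀ (w : List α) (r₁ r₂ : Fin (w.length + 1) → σ),
    M.IsAcceptingRun w r₁ → M.IsAcceptingRun w r₂ → r₁ = r₂

/-- A deterministic NFA (a DFA with a possibly partial transition function):
exactly one initial state and at most one successor per state and letter. -/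
def NFA.Deterministic {α σ : Type*} (M : NFA α σ) : Prop :=
  (∃ q₀, M.start = {q₀}) ∧ ∀ q a, (M.step q a).Subsingleton

/-- Minimal number of states of an NFA recognizing `L` (`nN(L)`). -/
noncomputable def nN {α : Type} (L : Language α) : ℕ :=
  sInf {n | ∃ (σ : Type) (inst : Fintype σ) (M : NFA α σ),
    @Fintype.card σ inst = n ∧ M.accepts = L}

/-- Minimal number of states of a DFA (partial transition function allowed)
recognizing `L` (`nD(L)`). -/
noncomputable def nD {α : Type} (L : Language α) : ℕ :=
  sInf {n | ∃ (σ : Type) (inst : Fintype σ) (M : NFA α σ),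
    M.Deterministic ∧ @Fintype.card σ inst = n ∧ M.accepts = L}

/-- Minimal number of states of an unambiguous NFA recognizing `L` (`nU(L)`). -/
noncomputable def nU {α : Type} (L : Language α) : ℕ :=
  sInf {n | ∃ (σ : Type) (inst : Fintype σ) (M : NFA α σ),
    M.Unambiguous ∧ @Fintype.card σ inst = n ∧ M.accepts = L}

/-- Upward closure: all superwords (w.r.t. the scattered-subword ordering
`List.Sublist`) of words of `L`. -/
def upClosure {α : Type} (L : Language α) : Language α := {x | ∃ y ∈ L, y.Sublist x}

/-- Downward closure: all subwords of words of `L`. -/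
def downClosure {α : Type} (L : Language α) : Language α := {x | ∃ y ∈ L, x.Sublist y}

/-- Upward interior: words all of whose superwords are in `L`. -/
def upInterior {α : Type} (L : Language α) : Language α := {x | ∀ y, x.Sublist y → y ∈ L}

/-- Downward interior: words all of whose subwords are in `L`. -/
def downInterior {α : Type} (L : Language α) : Language α := {x | ∀ y, y.Sublist x → y ∈ L}

private lemma evalFrom_append {α σ : Type*} (M : NFA α σ) (S : Set σ) (u v : List α) :
    M.evalFrom S (u ++ v) = M.evalFrom (M.evalFrom S u) v :=
  List.foldl_append

private lemma evalFrom_mono {α σ : Type*} (M : NFA α σ) {S T : Set σ} (h : S ⊆ T)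
    (w : List α) : M.evalFrom S w ⊆ M.evalFrom T w := by
  induction w generalizing S T with
  | nil => simpa
  | cons a w ih =>
    apply ih
    intro q hq
    rw [NFA.mem_stepSet] at hq ⊢
    obtain ⟨t, ht, h2⟩ := hq
    exact ⟨t, h ht, h2⟩

private lemma evalFrom_split {α σ : Type*} (M : NFA α σ) {S : Set σ} {w : List α} {q : σ}
    (h : q ∈ M.evalFrom S w) : ∃ p ∈ S, q ∈ M.evalFrom {p} w := by
  induction w generalizing S with
  | nil => exact ⟨q, h, rfl⟩
  | cons a w ih =>
    obtain ⟨r, hr, h2⟩ := ih h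
    rw [NFA.mem_stepSet] at hr
    obtain ⟨p, hp, hrp⟩ := hr
    refine ⟨p, hp, evalFrom_mono M ?_ w h2⟩
    intro z hz
    rw [Set.mem_singleton_iff] at hz
    subst hz
    rw [NFA.mem_stepSet]
    exact ⟨p, rfl, hrp⟩

/-- Extended fooling set technique: if `S = {(x i, y i)}_{i < n}` is a fooling set
for `L` (each `x i ++ y i ∈ L`, and for `i ≠ j` at least one of `x i ++ y j`,
`x j ++ y i` is not in `L`), then every NFA recognizing `L` has at least `n` states. -/
theorem extended_fooling_set {α : Type} [Fintype α] (L : Language α) (n : ℕ)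
    (x y : Fin n → List α)
    (hmem : ∀ i, x i ++ y i ∈ L)
    (hfool : ∀ i j, i ≠ j → x i ++ y j ∉ L ∨ x j ++ y i ∉ L)
    (σ : Type) [Fintype σ] (M : NFA α σ) (hM : M.accepts = L) :
    n ≤ Fintype.card σ := by
  subst hM
  have key : ∀ i : Fin n, ∃ p : σ, p ∈ M.evalFrom M.start (x i) ∧
      ∃ q ∈ M.accept, q ∈ M.evalFrom {p} (y i) := by
    intro i
    have h := hmem i
    rw [NFA.mem_accepts] at h
    obtain ⟨q, hq, hq2⟩ := h
    rw [evalFrom_append] at hq2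
    obtain ⟨p, hp, hp2⟩ := evalFrom_split M hq2
    exact ⟨p, hp, q, hq, hp2⟩
  choose f hf1 hf2 using key
  have hinj : Function.Injective f := by
    intro i j hij
    by_contra hne
    have cross : ∀ a b : Fin n, f a = f b → x a ++ y b ∈ M.accepts := by
      intro a b hab
      rw [NFA.mem_accepts]
      obtain ⟨q, hq, hq2⟩ := hf2 b
      refine ⟨q, hq, ?_⟩
      rw [evalFrom_append]
      refine evalFrom_mono M ?_ (y b) hq2
      intro z hz
      rw [Set.mem_singleton_iff] at hz
      subst hz
      rw [← hab]
      exact hf1 a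
    rcases hfool i j hne with h | h
    · exact h (cross i j hij)
    · exact h (cross j i hij.symm)
  simpa using Fintype.card_le_of_injective f hinj
end

section
/- Let Σ be a finite alphabet with k letters, let U_Σ = {x ∈ Σ* | every letter of Σ occurs in x} and V_Σ = {x ∈ Σ* | no letter occurs twice in x}. Then nN(U_Σ) = nD(U_Σ) = 2^k and nN(V_Σ) = nD(V_Σ) = 2^k; that is, each of U_Σ and V_Σ is recognized by a DFA with 2^k states, and every NFA recognizing U_Σ (respectively V_Σ) has at least 2^k states. -/
namespace MyAux
open NFA

variable {α σ : Type} (M : NFA α σ)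

theorem evalFrom_cons (S : Set σ) (a : α) (w : List α) :
    M.evalFrom S (a :: w) = M.evalFrom (M.stepSet S a) w := rfl

theorem evalFrom_append (S : Set σ) (x y : List α) :
    M.evalFrom S (x ++ y) = M.evalFrom (M.evalFrom S x) y :=
  List.foldl_append

theorem evalFrom_empty (w : List α) : M.evalFrom ∅ w = ∅ := by
  induction w with
  | nil => rfl
  | cons a w ih => rw [evalFrom_cons, M.stepSet_empty, ih]

theorem mem_evalFrom_iff (S : Set σ) (w : List α) (q : σ) :
    q ∈ M.evalFrom S w ↔ ∃ p ∈ S, q ∈ M.evalFrom {p} w := by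
  induction w generalizing S with
  | nil => simp [NFA.evalFrom]
  | cons a w ih =>
    rw [evalFrom_cons, ih]
    constructor
    · rintro ⟨p, hp, hq⟩
      rw [NFA.mem_stepSet] at hp
      obtain ⟨t, ht, hpt⟩ := hp
      refine ⟨t, ht, ?_⟩
      rw [evalFrom_cons, ih]
      exact ⟨p, by simpa [NFA.mem_stepSet] using hpt, hq⟩
    · rintro ⟨p, hp, hq⟩
      rw [evalFrom_cons, ih] at hq
      obtain ⟨t, ht, hq⟩ := hq
      exact ⟨t, (NFA.mem_stepSet).2 ⟨p, hp, by simpa [NFA.mem_stepSet] using ht⟩, hq⟩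

/-- Fooling set lower bound. -/
theorem fooling {α σ : Type} [Fintype σ] (M : NFA α σ) (L : Language α)
    (hM : M.accepts = L) {ι : Type} [Fintype ι] (x y : ι → List α)
    (hmem : ∀ i, x i ++ y i ∈ L)
    (hcross : ∀ i j, i ≠ j → x i ++ y j ∉ L ∨ x j ++ y i ∉ L) :
    Fintype.card ι ≤ Fintype.card σ := by
  have hq : ∀ i : ι, ∃ q, q ∈ M.evalFrom M.start (x i) ∧
      ∃ f ∈ M.accept, f ∈ M.evalFrom {q} (y i) := by
    intro i
    have := hmem i
    rw [← hM, NFA.mem_accepts] at this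
    obtain ⟨f, hf, hfe⟩ := this
    rw [evalFrom_append, mem_evalFrom_iff] at hfe
    obtain ⟨q, hq, hfq⟩ := hfe
    exact ⟨q, hq, f, hf, hfq⟩
  choose q hq1 hq2 using hq
  refine Fintype.card_le_of_injective q fun i j hij => ?_
  by_contra hne
  have key : ∀ i j : ι, q i = q j → x i ++ y j ∈ L := by
    intro i j h
    rw [← hM, NFA.mem_accepts]
    obtain ⟨f, hf, hfq⟩ := hq2 j
    refine ⟨f, hf, ?_⟩
    rw [evalFrom_append, mem_evalFrom_iff]
    exact ⟨q i, hq1 i, h ▸ hfq⟩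
  rcases hcross i j hne with h | h
  · exact h (key i j hij)
  · exact h (key j i hij.symm)

/-- DFA for `U`: track the set of letters seen. -/
def UAut (α : Type) [DecidableEq α] [Fintype α] : NFA α (Finset α) where
  step := fun S a => {insert a S}
  start := {∅}
  accept := {Finset.univ}

/-- DFA for `V`: track the set of letters seen; die on a repeat. -/
def VAut (α : Type) [DecidableEq α] : NFA α (Finset α) where
  step := fun S a => if a ∈ S then ∅ else {insert a S}
  start := {∅}
  accept := Set.univ

theorem UAut_evalFrom {α : Type} [DecidableEq α] [Fintype α] (w : List α) (S : Finset α) :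
    (UAut α).evalFrom {S} w = {S ∪ w.toFinset} := by
  induction w generalizing S with
  | nil => simp [NFA.evalFrom]
  | cons a w ih =>
    have hstep : (UAut α).stepSet {S} a = {insert a S} := by
      simp [NFA.stepSet, UAut]
    rw [evalFrom_cons, hstep, ih]
    congr 1
    rw [List.toFinset_cons, Finset.union_insert, Finset.insert_union]

theorem UAut_accepts {α : Type} [DecidableEq α] [Fintype α] :
    (UAut α).accepts = {x : List α | ∀ a : α, a ∈ x} := by
  ext w
  rw [NFA.mem_accepts]
  have : (UAut α).start = {(∅ : Finset α)} := rfl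
  rw [this, UAut_evalFrom]
  constructor
  · rintro ⟨f, hf, hfe⟩ a
    simp only [UAut, Set.mem_singleton_iff] at hf hfe
    have : a ∈ (∅ : Finset α) ∪ w.toFinset := by rw [← hfe, hf]; exact Finset.mem_univ a
    simpa using this
  · intro h
    refine ⟨Finset.univ, rfl, ?_⟩
    simp only [Set.mem_singleton_iff, Finset.empty_union]
    ext a
    simpa using h a
    
theorem VAut_evalFrom {α : Type} [DecidableEq α] (w : List α) (S : Finset α) :
    (VAut α).evalFrom {S} w =
      {T | w.Nodup ∧ (∀ a ∈ w, a ∉ S) ∧ T = S ∪ w.toFinset} := by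
  induction w generalizing S with
  | nil => ext T; simp [NFA.evalFrom]
  | cons a w ih =>
    by_cases h : a ∈ S
    · have hstep : (VAut α).stepSet {S} a = ∅ := by
        simp [NFA.stepSet, VAut, h]
      rw [evalFrom_cons, hstep, evalFrom_empty]
      ext T
      simp only [Set.mem_empty_iff_false, Set.mem_setOf_eq, false_iff]
      rintro ⟨-, h2, -⟩
      exact h2 a (List.mem_cons_self) h
    · have hstep : (VAut α).stepSet {S} a = {insert a S} := by
        simp [NFA.stepSet, VAut, h]
      rw [evalFrom_cons, hstep, ih]
      ext T
      simp only [Set.mem_setOf_eq, List.nodup_cons, List.mem_cons, Finset.mem_insert,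
        List.toFinset_cons]
      constructor
      · rintro ⟨hnd, hni, rfl⟩
        refine ⟨⟨fun ha => hni a ha (Or.inl rfl), hnd⟩, ?_, ?_⟩
        · rintro b (rfl | hb)
          · exact h
          · exact fun hbS => hni b hb (Or.inr hbS)
        · rw [Finset.insert_union, Finset.union_insert]
      · rintro ⟨⟨haw, hnd⟩, hni, rfl⟩
        refine ⟨hnd, ?_, ?_⟩
        · intro b hb
          rintro (rfl | hbS)
          · exact haw hb
          · exact hni b (Or.inr hb) hbS
        · rw [Finset.insert_union, Finset.union_insert]

theorem VAut_accepts {α : Type} [DecidableEq α] :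
    (VAut α).accepts = {x : List α | x.Nodup} := by
  ext w
  rw [NFA.mem_accepts]
  have : (VAut α).start = {(∅ : Finset α)} := rfl
  rw [this, VAut_evalFrom]
  constructor
  · rintro ⟨f, -, hnd, -, -⟩
    exact hnd
  · intro h
    exact ⟨∅ ∪ w.toFinset, trivial, h, by simp, rfl⟩

end MyAux

/-- For a `k`-letter alphabet, the languages `U_Σ` (all letters occur) and `V_Σ`
(no letter occurs twice) satisfy `nN = nD = 2^k`; in particular each is recognized
by a DFA with `2^k` states and every NFA recognizing it has at least `2^k` states. -/
theorem nN_nD_of_U_and_V {α : Type} [Fintype α] (k : ℕ) (hk : Fintype.card α = k)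
    (U V : Language α)
    (hU : U = {x | ∀ a : α, a ∈ x})
    (hV : V = {x | x.Nodup}) :
    nN U = 2 ^ k ∧ nD U = 2 ^ k ∧ nN V = 2 ^ k ∧ nD V = 2 ^ k ∧
    (∀ (σ : Type) [Fintype σ] (M : NFA α σ), M.accepts = U → 2 ^ k ≤ Fintype.card σ) ∧
    (∀ (σ : Type) [Fintype σ] (M : NFA α σ), M.accepts = V → 2 ^ k ≤ Fintype.card σ) := by
  classical
  subst hU hV
  letI : DecidableEq α := Classical.decEq α
  -- fooling words
  set x : Finset α → List α := fun S => S.toList with hx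
  set y : Finset α → List α := fun S => Sᶜ.toList with hy
  have hmemU : ∀ S : Finset α, x S ++ y S ∈ ({w : List α | ∀ a : α, a ∈ w} : Language α) := by
    intro S a
    rw [List.mem_append, Finset.mem_toList, Finset.mem_toList, Finset.mem_compl]
    exact em _
  have hcrossU : ∀ S T : Finset α, S ≠ T →
      x S ++ y T ∉ ({w : List α | ∀ a : α, a ∈ w} : Language α) ∨
      x T ++ y S ∉ ({w : List α | ∀ a : α, a ∈ w} : Language α) := by
    intro S T hST
    have : (∃ a ∈ S, a ∉ T) ∨ (∃ a ∈ T, a ∉ S) := by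
      by_contra h
      push_neg at h
      exact hST (Finset.Subset.antisymm h.1 h.2)
    rcases this with ⟨a, haS, haT⟩ | ⟨a, haT, haS⟩
    · right
      intro h
      have := h a
      rw [List.mem_append, Finset.mem_toList, Finset.mem_toList, Finset.mem_compl] at this
      rcases this with h' | h'
      · exact haT h'
      · exact h' haS
    · left
      intro h
      have := h a
      rw [List.mem_append, Finset.mem_toList, Finset.mem_toList, Finset.mem_compl] at this
      rcases this with h' | h'
      · exact haS h'
      · exact h' haT
  have hmemV : ∀ S : Finset α, x S ++ y S ∈ ({w : List α | w.Nodup} : Language α) := by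
    intro S
    refine List.Nodup.append S.nodup_toList Sᶜ.nodup_toList ?_
    intro a ha ha'
    rw [Finset.mem_toList] at ha ha'
    exact (Finset.mem_compl.1 ha') ha
  have hcrossV : ∀ S T : Finset α, S ≠ T →
      x S ++ y T ∉ ({w : List α | w.Nodup} : Language α) ∨
      x T ++ y S ∉ ({w : List α | w.Nodup} : Language α) := by
    intro S T hST
    have : (∃ a ∈ S, a ∉ T) ∨ (∃ a ∈ T, a ∉ S) := by
      by_contra h
      push_neg at h
      exact hST (Finset.Subset.antisymm h.1 h.2)
    have key : ∀ (S T : Finset α) (a : α), a ∈ S → a ∉ T →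
        x S ++ y T ∉ ({w : List α | w.Nodup} : Language α) := by
      intro S T a haS haT h
      have hsub : ([a] ++ [a]).Sublist (x S ++ y T) :=
        List.Sublist.append ((List.singleton_sublist).2 (Finset.mem_toList.2 haS))
          ((List.singleton_sublist).2 (Finset.mem_toList.2 (Finset.mem_compl.2 haT)))
      have hnd : ([a] ++ [a]).Nodup := List.Nodup.sublist hsub h
      simp at hnd
    rcases this with ⟨a, haS, haT⟩ | ⟨a, haT, haS⟩
    · exact Or.inl (key S T a haS haT)
    · exact Or.inr (key T S a haT haS)
  -- lower bounds
  have hlbU : ∀ (σ : Type) (inst : Fintype σ) (M : NFA α σ),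
      M.accepts = ({w : List α | ∀ a : α, a ∈ w} : Language α) → 2 ^ k ≤ Fintype.card σ := by
    intro σ inst M hM
    have := MyAux.fooling M _ hM x y hmemU (fun S T h => hcrossU S T h)
    rwa [Fintype.card_finset, hk] at this
  have hlbV : ∀ (σ : Type) (inst : Fintype σ) (M : NFA α σ),
      M.accepts = ({w : List α | w.Nodup} : Language α) → 2 ^ k ≤ Fintype.card σ := by
    intro σ inst M hM
    have := MyAux.fooling M _ hM x y hmemV (fun S T h => hcrossV S T h)
    rwa [Fintype.card_finset, hk] at this
  -- upper bounds: the automata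
  have hcard : Fintype.card (Finset α) = 2 ^ k := by rw [Fintype.card_finset, hk]
  have hUdet : (MyAux.UAut α).Deterministic := by
    refine ⟨⟨∅, rfl⟩, fun q a => ?_⟩
    exact Set.subsingleton_singleton
  have hVdet : (MyAux.VAut α).Deterministic := by
    refine ⟨⟨∅, rfl⟩, fun q a => ?_⟩
    by_cases h : a ∈ q
    · simp only [MyAux.VAut, if_pos h]
      exact Set.subsingleton_empty
    · simp only [MyAux.VAut, if_neg h]
      exact Set.subsingleton_singleton
  have hmemDN : ∀ (L : Language α),
      (∃ (σ : Type) (inst : Fintype σ) (M : NFA α σ), M.Deterministic ∧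
        @Fintype.card σ inst = 2 ^ k ∧ M.accepts = L) →
      (∀ (σ : Type) (inst : Fintype σ) (M : NFA α σ), M.accepts = L → 2 ^ k ≤ Fintype.card σ) →
      nN L = 2 ^ k ∧ nD L = 2 ^ k := by
    rintro L ⟨σ, inst, M, hdet, hc, hacc⟩ hlb
    constructor
    · refine le_antisymm (Nat.sInf_le ⟨σ, inst, M, hc, hacc⟩) ?_
      refine le_csInf ⟨_, σ, inst, M, hc, hacc⟩ ?_
      rintro n ⟨τ, instτ, N, hcN, haccN⟩
      exact hcN ▸ hlb τ instτ N haccN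
    · refine le_antisymm (Nat.sInf_le ⟨σ, inst, M, hdet, hc, hacc⟩) ?_
      refine le_csInf ⟨_, σ, inst, M, hdet, hc, hacc⟩ ?_
      rintro n ⟨τ, instτ, N, _, hcN, haccN⟩
      exact hcN ▸ hlb τ instτ N haccN
  obtain ⟨hNU, hDU⟩ := hmemDN _ ⟨Finset α, inferInstance, MyAux.UAut α, hUdet, hcard,
    MyAux.UAut_accepts⟩ hlbU
  obtain ⟨hNV, hDV⟩ := hmemDN _ ⟨Finset α, inferInstance, MyAux.VAut α, hVdet, hcard,
    MyAux.VAut_accepts⟩ hlbV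
  exact ⟨hNU, hDU, hNV, hDV, fun σ inst M h => hlbU σ inst M h,
    fun σ inst M h => hlbV σ inst M h⟩
end

section
/- State complexity of upward closure, upper bound: if L ⊆ Σ* is a regular language recognized by an NFA with n states, where n ≥ 2, then the upward closure ↑L is recognized by a DFA with at most 2^{n−2} + 1 states, i.e., nD(↑L) ≤ 2^{n−2} + 1. -/
section UpAux

variable {α σ : Type}

/-- The saturated NFA: add a self-loop on every letter at every state. -/
def satN (M : NFA α σ) : NFA α σ :=
  ⟨fun q a => insert q (M.step q a), M.start, M.accept⟩

lemma satN_stepSet (M : NFA α σ) (S : Set σ) (a : α) :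
    (satN M).stepSet S a = S ∪ M.stepSet S a := by
  ext q
  simp only [NFA.mem_stepSet, satN, Set.mem_union, Set.mem_insert_iff]
  constructor
  · rintro ⟨t, ht, rfl | h⟩
    · exact Or.inl ht
    · exact Or.inr ⟨t, ht, h⟩
  · rintro (hq | ⟨t, ht, h⟩)
    · exact ⟨q, hq, Or.inl rfl⟩
    · exact ⟨t, ht, Or.inr h⟩

lemma subset_satN_stepSet (M : NFA α σ) (S : Set σ) (a : α) :
    S ⊆ (satN M).stepSet S a := by
  rw [satN_stepSet]; exact Set.subset_union_left

lemma stepSet_union (M : NFA α σ) (S T : Set σ) (a : α) :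
    M.stepSet (S ∪ T) a = M.stepSet S a ∪ M.stepSet T a := by
  ext q
  simp only [NFA.mem_stepSet, Set.mem_union]
  constructor
  · rintro ⟨t, ht | ht, h⟩
    · exact Or.inl ⟨t, ht, h⟩
    · exact Or.inr ⟨t, ht, h⟩
  · rintro (⟨t, ht, h⟩ | ⟨t, ht, h⟩)
    · exact ⟨t, Or.inl ht, h⟩
    · exact ⟨t, Or.inr ht, h⟩

lemma evalFrom_union (M : NFA α σ) (S T : Set σ) (x : List α) :
    M.evalFrom (S ∪ T) x = M.evalFrom S x ∪ M.evalFrom T x := by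
  induction x generalizing S T with
  | nil => simp
  | cons a x ih =>
    show M.evalFrom (M.stepSet (S ∪ T) a) x = _
    rw [stepSet_union, ih]
    rfl

lemma evalFrom_cons (M : NFA α σ) (S : Set σ) (a : α) (x : List α) :
    M.evalFrom S (a :: x) = M.evalFrom (M.stepSet S a) x := rfl

lemma mem_satN_evalFrom (M : NFA α σ) (S : Set σ) (x : List α) (q : σ) :
    q ∈ (satN M).evalFrom S x ↔ ∃ y, y.Sublist x ∧ q ∈ M.evalFrom S y := by
  induction x generalizing S with
  | nil =>
    simp only [NFA.evalFrom_nil, List.sublist_nil]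
    constructor
    · exact fun h => ⟨[], rfl, h⟩
    · rintro ⟨y, rfl, h⟩; exact h
  | cons a x ih =>
    rw [evalFrom_cons, ih, satN_stepSet]
    constructor
    · rintro ⟨y, hy, hq⟩
      rw [evalFrom_union] at hq
      rcases hq with hq | hq
      · exact ⟨y, hy.cons a, hq⟩
      · exact ⟨a :: y, hy.cons₂ a, hq⟩
    · rintro ⟨y, hy, hq⟩
      rcases List.sublist_cons_iff.mp hy with hy | ⟨r, rfl, hr⟩
      · exact ⟨y, hy, by rw [evalFrom_union]; exact Or.inl hq⟩
      · exact ⟨r, hr, by rw [evalFrom_union]; exact Or.inr hq⟩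

lemma satN_accepts (M : NFA α σ) : (satN M).accepts = upClosure M.accepts := by
  ext x
  simp only [NFA.mem_accepts]
  constructor
  · rintro ⟨q, hq, hx⟩
    rcases (mem_satN_evalFrom M M.start x q).mp hx with ⟨y, hy, h⟩
    exact ⟨y, ⟨q, hq, h⟩, hy⟩
  · rintro ⟨y, ⟨q, hq, h⟩, hy⟩
    exact ⟨q, hq, (mem_satN_evalFrom M M.start x q).mpr ⟨y, hy, h⟩⟩

lemma evalFrom_empty' (M : NFA α σ) (x : List α) : M.evalFrom ∅ x = ∅ := by
  induction x with
  | nil => rfl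
  | cons a x ih => rw [evalFrom_cons, NFA.stepSet_empty, ih]

lemma stepSet_singleton (M : NFA α σ) (q : σ) (a : α) :
    M.stepSet {q} a = M.step q a := by
  ext t; simp [NFA.mem_stepSet]

lemma nD_le_of_det {L : Language α} (σ' : Type) (inst : Fintype σ') (D : NFA α σ')
    (hdet : D.Deterministic) (hacc : D.accepts = L) : nD L ≤ @Fintype.card σ' inst :=
  Nat.sInf_le ⟨σ', inst, D, hdet, rfl, hacc⟩

end UpAux

section Det

attribute [local instance] Classical.propDecidable

variable {α σ : Type} [Fintype σ]

noncomputable instance : Fintype (Set σ) := Set.fintype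

/-- States of the determinization: subsets containing `q0` and avoiding `qf`, plus a sink. -/
def DetQ (σ : Type) (q0 qf : σ) : Type := Option {T : Set σ // q0 ∈ T ∧ qf ∉ T}

noncomputable instance (q0 qf : σ) : Fintype (DetQ σ q0 qf) := by
  unfold DetQ; infer_instance

def detEquiv (q0 qf : σ) (hne : q0 ≠ qf) :
    {T : Set σ // q0 ∈ T ∧ qf ∉ T} ≃ Set {x : σ // x ≠ q0 ∧ x ≠ qf} where
  toFun T := {x | (x : σ) ∈ T.1}
  invFun S := ⟨{x | x = q0 ∨ ∃ h : x ≠ q0 ∧ x ≠ qf, (⟨x, h⟩ : {x : σ // x ≠ q0 ∧ x ≠ qf}) ∈ S},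
    Or.inl rfl, by
      rintro (h | ⟨⟨h1, h2⟩, _⟩)
      · exact hne h.symm
      · exact h2 rfl⟩
  left_inv := by
    rintro ⟨T, hq0, hqf⟩
    ext x
    simp only [Set.mem_setOf_eq]
    constructor
    · rintro (rfl | ⟨h, hx⟩)
      · exact hq0
      · exact hx
    · intro hx
      by_cases h1 : x = q0
      · exact Or.inl h1
      · have h2 : x ≠ qf := fun h => hqf (h ▸ hx)
        exact Or.inr ⟨⟨h1, h2⟩, hx⟩
  right_inv := by
    intro S
    ext ⟨x, hx⟩
    simp only [Set.mem_setOf_eq]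
    constructor
    · rintro (h | ⟨h, hS⟩)
      · exact absurd h hx.1
      · exact hS
    · intro hS
      exact Or.inr ⟨hx, hS⟩

lemma card_detQ (q0 qf : σ) (hne : q0 ≠ qf) :
    Fintype.card (DetQ σ q0 qf) = 2 ^ (Fintype.card σ - 2) + 1 := by
  have h1 : Fintype.card {T : Set σ // q0 ∈ T ∧ qf ∉ T} = 2 ^ (Fintype.card σ - 2) := by
    rw [Fintype.card_congr (detEquiv q0 qf hne), Fintype.card_set]
    congr 1
    have e : {x : σ // x ≠ q0 ∧ x ≠ qf} ≃ {x : σ // ¬(x = q0 ∨ x = qf)} :=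
      Equiv.subtypeEquivRight (fun x => by tauto)
    rw [Fintype.card_congr e, Fintype.card_subtype_compl]
    congr 1
    have e2 : {x : σ // x = q0 ∨ x = qf} ≃ {x : σ // x ∈ ({q0, qf} : Finset σ)} :=
      Equiv.subtypeEquivRight (fun x => by simp)
    rw [Fintype.card_congr e2, Fintype.card_coe, Finset.card_pair hne]
  show Fintype.card (Option _) = _
  rw [Fintype.card_option, h1]

/-- Determinization of `satN M`, with all accepting subsets merged into the sink `none`. -/
noncomputable def detD (M : NFA α σ) (q0 qf : σ) (hqf : qf ∈ M.accept)
    (hs : q0 ∈ M.start ∧ qf ∉ M.start) : NFA α (DetQ σ q0 qf) where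
  step x a :=
    match x with
    | none => {none}
    | some T =>
      if h : ((satN M).stepSet T.1 a) ∩ M.accept = ∅ then
        {some ⟨(satN M).stepSet T.1 a,
          subset_satN_stepSet M T.1 a T.2.1,
          fun hmem => Set.eq_empty_iff_forall_notMem.mp h qf ⟨hmem, hqf⟩⟩}
      else {none}
  start := {some ⟨M.start, hs⟩}
  accept := {none}


lemma detD_step_none (M : NFA α σ) (q0 qf : σ) (hqf : qf ∈ M.accept)
    (hs : q0 ∈ M.start ∧ qf ∉ M.start) (a : α) :
    (detD M q0 qf hqf hs).step none a = {none} := rfl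

lemma detD_step_some (M : NFA α σ) (q0 qf : σ) (hqf : qf ∈ M.accept)
    (hs : q0 ∈ M.start ∧ qf ∉ M.start) (T : {T : Set σ // q0 ∈ T ∧ qf ∉ T}) (a : α) :
    (detD M q0 qf hqf hs).step (some T) a =
      if h : ((satN M).stepSet T.1 a) ∩ M.accept = ∅ then
        ({some ⟨(satN M).stepSet T.1 a,
          subset_satN_stepSet M T.1 a T.2.1,
          fun hmem => Set.eq_empty_iff_forall_notMem.mp h qf ⟨hmem, hqf⟩⟩} : Set (DetQ σ q0 qf))
      else {none} := rfl

lemma detD_det (M : NFA α σ) (q0 qf : σ) (hqf : qf ∈ M.accept)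
    (hs : q0 ∈ M.start ∧ qf ∉ M.start) : (detD M q0 qf hqf hs).Deterministic := by
  constructor
  · exact ⟨_, rfl⟩
  · intro q a
    match q with
    | none => exact Set.subsingleton_singleton
    | some T =>
      rw [detD_step_some]
      split <;> exact Set.subsingleton_singleton

lemma detD_eval (M : NFA α σ) (q0 qf : σ) (hqf : qf ∈ M.accept)
    (hs : q0 ∈ M.start ∧ qf ∉ M.start) (hsa : M.start ∩ M.accept = ∅) (w : List α) :
    (((satN M).evalFrom M.start w) ∩ M.accept ≠ ∅ →
      (detD M q0 qf hqf hs).evalFrom (detD M q0 qf hqf hs).start w = {none}) ∧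
    (((satN M).evalFrom M.start w) ∩ M.accept = ∅ →
      ∃ h : q0 ∈ (satN M).evalFrom M.start w ∧ qf ∉ (satN M).evalFrom M.start w,
        (detD M q0 qf hqf hs).evalFrom (detD M q0 qf hqf hs).start w
          = {some ⟨(satN M).evalFrom M.start w, h⟩}) := by
  induction w using List.reverseRecOn with
  | nil =>
    constructor
    · intro h
      exact absurd hsa h
    · intro _
      exact ⟨hs, rfl⟩
  | append_singleton w a ih =>
    have hmono : (satN M).evalFrom M.start w ⊆ (satN M).evalFrom M.start (w ++ [a]) := by
      rw [NFA.evalFrom_append, NFA.evalFrom_singleton]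
      exact subset_satN_stepSet M _ a
    constructor
    · intro hne
      by_cases hw : ((satN M).evalFrom M.start w) ∩ M.accept = ∅
      · obtain ⟨h, heq⟩ := ih.2 hw
        rw [NFA.evalFrom_append, NFA.evalFrom_singleton, heq]
        erw [stepSet_singleton]
        rw [detD_step_some, dif_neg]
        rw [← NFA.evalFrom_singleton, ← NFA.evalFrom_append]
        exact hne
      · have heq := ih.1 hw
        rw [NFA.evalFrom_append, NFA.evalFrom_singleton, heq]
        erw [stepSet_singleton]
        rfl
    · intro he
      have hw : ((satN M).evalFrom M.start w) ∩ M.accept = ∅ := by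
        rw [Set.eq_empty_iff_forall_notMem] at he ⊢
        rintro q ⟨hq1, hq2⟩
        exact he q ⟨hmono hq1, hq2⟩
      obtain ⟨h, heq⟩ := ih.2 hw
      have he' : ((satN M).stepSet ((satN M).evalFrom M.start w) a) ∩ M.accept = ∅ := by
        rw [← NFA.evalFrom_singleton, ← NFA.evalFrom_append]; exact he
      refine ⟨⟨hmono h.1, fun hmem => Set.eq_empty_iff_forall_notMem.mp he qf ⟨hmem, hqf⟩⟩, ?_⟩
      rw [NFA.evalFrom_append, NFA.evalFrom_singleton, heq]
      erw [stepSet_singleton]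
      rw [detD_step_some, dif_pos he']
      congr 1
      simp only [Option.some.injEq, Subtype.mk.injEq]
      rw [NFA.evalFrom_append, NFA.evalFrom_singleton]

lemma detD_accepts (M : NFA α σ) (q0 qf : σ) (hqf : qf ∈ M.accept)
    (hs : q0 ∈ M.start ∧ qf ∉ M.start) (hsa : M.start ∩ M.accept = ∅) :
    (detD M q0 qf hqf hs).accepts = upClosure M.accepts := by
  rw [← satN_accepts]
  ext x
  rw [NFA.mem_accepts, NFA.mem_accepts]
  have H := detD_eval M q0 qf hqf hs hsa x
  constructor
  · rintro ⟨q, hq, hx⟩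
    have hq' : q = none := hq
    subst hq'
    by_contra hne
    have he : ((satN M).evalFrom M.start x) ∩ M.accept = ∅ := by
      rw [Set.eq_empty_iff_forall_notMem]
      rintro q ⟨h1, h2⟩
      exact hne ⟨q, h2, h1⟩
    obtain ⟨h, heq⟩ := H.2 he
    rw [heq] at hx
    exact Option.some_ne_none _ (show (none : Option {T : Set σ // q0 ∈ T ∧ qf ∉ T}) = some _ from hx).symm
  · rintro ⟨q, hq, hx⟩
    have hne : ((satN M).evalFrom M.start x) ∩ M.accept ≠ ∅ :=
      Set.nonempty_iff_ne_empty.mp ⟨q, hx, hq⟩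
    rw [H.1 hne]
    exact ⟨none, rfl, rfl⟩

end Det

lemma unit_evalFrom {α' : Type} (D : NFA α' Unit) (hstep : ∀ q a, D.step q a = {()}) (x : List α') :
    D.evalFrom {()} x = {()} := by
  induction x with
  | nil => rfl
  | cons a x ih => rw [evalFrom_cons, stepSet_singleton, hstep, ih]

/-- Upper bound on the state complexity of upward closure: if `L` is recognized by
an NFA with `n ≥ 2` states, then `nD(↑L) ≤ 2^(n-2) + 1`. -/
theorem nD_upClosure_le {α σ : Type} [Fintype α] [Fintype σ] (M : NFA α σ) (n : ℕ)
    (hcard : Fintype.card σ = n) (hn : 2 ≤ n) :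
    nD (upClosure M.accepts) ≤ 2 ^ (n - 2) + 1 := by
  by_cases hempty : M.accepts = (∅ : Set (List α))
  · -- empty language: 1-state DFA with no accepting state
    have hup : upClosure M.accepts = (∅ : Set (List α)) := by
      rw [hempty]
      ext x
      exact ⟨fun ⟨y, hy, _⟩ => hy.elim, fun h => h.elim⟩
    have h1 : nD (upClosure M.accepts) ≤ 1 := by
      have := nD_le_of_det (L := upClosure M.accepts) Unit inferInstance
        ⟨fun _ _ => ∅, {()}, ∅⟩
        ⟨⟨(), rfl⟩, fun _ _ => Set.subsingleton_empty⟩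
        (by
          ext x
          simp only [NFA.mem_accepts]
          constructor
          · rintro ⟨q, hq, -⟩; exact absurd hq (Set.notMem_empty q)
          · intro hx; rw [hup] at hx; exact absurd hx (Set.notMem_empty x))
      rwa [Fintype.card_unit] at this
    exact h1.trans (Nat.le_add_left 1 _)
  by_cases hnil : [] ∈ M.accepts
  · -- ε ∈ L: upward closure is everything, 1-state DFA accepting everything
    have hup : upClosure M.accepts = (Set.univ : Set (List α)) := by
      ext x
      exact iff_of_true ⟨[], hnil, List.nil_sublist x⟩ trivial
    have h1 : nD (upClosure M.accepts) ≤ 1 := by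
      have := nD_le_of_det (L := upClosure M.accepts) Unit inferInstance
        ⟨fun _ _ => {()}, {()}, {()}⟩
        ⟨⟨(), rfl⟩, fun _ _ => Set.subsingleton_singleton⟩
        (by
          ext x
          simp only [NFA.mem_accepts]
          constructor
          · intro _
            exact ⟨[], hnil, List.nil_sublist x⟩
          · intro _
            refine ⟨(), rfl, ?_⟩
            rw [unit_evalFrom _ (fun _ _ => rfl)]
            rfl)
      rwa [Fintype.card_unit] at this
    exact h1.trans (Nat.le_add_left 1 _)
  · -- main case
    obtain ⟨x, hx⟩ := Set.nonempty_iff_ne_empty.mpr hempty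
    obtain ⟨qf, hqf, hqx⟩ := (NFA.mem_accepts (M := M)).mp hx
    have hstart : M.start.Nonempty := by
      rcases Set.eq_empty_or_nonempty M.start with h | h
      · rw [h, evalFrom_empty'] at hqx
        exact absurd hqx (Set.notMem_empty qf)
      · exact h
    obtain ⟨q0, hq0⟩ := hstart
    have hsa : M.start ∩ M.accept = ∅ := by
      rw [Set.eq_empty_iff_forall_notMem]
      rintro q ⟨h1, h2⟩
      exact hnil ((NFA.mem_accepts (M := M)).mpr ⟨q, h2, h1⟩)
    have hqfs : qf ∉ M.start := fun h =>
      Set.eq_empty_iff_forall_notMem.mp hsa qf ⟨h, hqf⟩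
    have hne : q0 ≠ qf := by
      rintro rfl
      exact hqfs hq0
    have := nD_le_of_det (L := upClosure M.accepts) (DetQ σ q0 qf) inferInstance
      (detD M q0 qf hqf ⟨hq0, hqfs⟩) (detD_det M q0 qf hqf ⟨hq0, hqfs⟩)
      (detD_accepts M q0 qf hqf ⟨hq0, hqfs⟩ hsa)
    rw [card_detQ q0 qf hne, hcard] at this
    exact this
end

section
/- State complexity of downward closure, upper bound: if L ⊆ Σ* is recognized by an NFA with n states having a single initial state, then the downward closure ↓L is recognized by a DFA with at most 2^{n−1} states, i.e., nD(↓L) ≤ 2^{n−1}. -/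
namespace DownAux

open Set

variable {α σ : Type} (M : NFA α σ)

lemma evalFrom_append (S : Set σ) (u v : List α) :
    M.evalFrom S (u ++ v) = M.evalFrom (M.evalFrom S u) v := by
  simp [NFA.evalFrom, List.foldl_append]

lemma mem_evalFrom_iff {p : σ} (S : Set σ) (w : List α) :
    p ∈ M.evalFrom S w ↔ ∃ q ∈ S, p ∈ M.evalFrom {q} w := by
  induction w generalizing S with
  | nil => simp
  | cons a w ih =>
    have h1 : ∀ T : Set σ, M.evalFrom T (a :: w) = M.evalFrom (M.stepSet T a) w := fun _ => rfl
    rw [h1, ih]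
    constructor
    · rintro ⟨r, hr, hp⟩
      rw [NFA.mem_stepSet] at hr
      obtain ⟨q, hq, hr⟩ := hr
      refine ⟨q, hq, ?_⟩
      rw [h1, ih]
      exact ⟨r, by simp [NFA.mem_stepSet, hr], hp⟩
    · rintro ⟨q, hq, hp⟩
      rw [h1, ih] at hp
      obtain ⟨r, hr, hp⟩ := hp
      rw [NFA.mem_stepSet] at hr
      obtain ⟨q', hq', hr⟩ := hr
      rw [mem_singleton_iff] at hq'
      exact ⟨r, by rw [NFA.mem_stepSet]; exact ⟨q, hq, hq' ▸ hr⟩, hp⟩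

/-- Reachability closure. -/
def R (X : Set σ) : Set σ := {p | ∃ q ∈ X, ∃ v, p ∈ M.evalFrom {q} v}

lemma subset_R (X : Set σ) : X ⊆ R M X := fun p hp => ⟨p, hp, [], rfl⟩

lemma R_mono {X Y : Set σ} (h : X ⊆ Y) : R M X ⊆ R M Y := by
  rintro p ⟨q, hq, v, hv⟩; exact ⟨q, h hq, v, hv⟩

lemma R_R (X : Set σ) : R M (R M X) ⊆ R M X := by
  rintro p ⟨q, ⟨r, hr, u, hu⟩, v, hv⟩
  refine ⟨r, hr, u ++ v, ?_⟩
  rw [evalFrom_append, mem_evalFrom_iff]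
  exact ⟨q, hu, hv⟩

@[simp] lemma R_empty : R M (∅ : Set σ) = ∅ := by
  ext p; simp [R]

variable (q₀ : σ)

/-- States of `M` reachable from `q₀` on superwords of `w`. -/
def E (w : List α) : Set σ := {p | ∃ y, w.Sublist y ∧ p ∈ M.evalFrom {q₀} y}

lemma E_nil : E M q₀ [] = R M {q₀} := by
  ext p
  constructor
  · rintro ⟨y, _, hy⟩; exact ⟨q₀, rfl, y, hy⟩
  · rintro ⟨q, hq, v, hv⟩
    rw [mem_singleton_iff] at hq; subst hq
    exact ⟨v, List.nil_sublist v, hv⟩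

lemma E_key (w : List α) (a : α) :
    E M q₀ (w ++ [a]) = R M (M.stepSet (E M q₀ w) a) := by
  ext p
  constructor
  · rintro ⟨y, hsub, hy⟩
    rw [List.append_sublist_iff] at hsub
    obtain ⟨r₁, r₂, rfl, h₁, h₂⟩ := hsub
    have ha : a ∈ r₂ := h₂.mem (List.mem_singleton_self a)
    obtain ⟨s, t, rfl⟩ := List.append_of_mem ha
    rw [show r₁ ++ (s ++ a :: t) = (r₁ ++ s) ++ [a] ++ t by simp] at hy
    rw [evalFrom_append, mem_evalFrom_iff] at hy
    obtain ⟨q, hq, hp⟩ := hy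
    rw [NFA.evalFrom_append, NFA.evalFrom_singleton, NFA.mem_stepSet] at hq
    obtain ⟨r, hr, hq⟩ := hq
    refine ⟨q, ?_, t, hp⟩
    rw [NFA.mem_stepSet]
    exact ⟨r, ⟨r₁ ++ s, h₁.trans (List.sublist_append_left r₁ s), hr⟩, hq⟩
  · rintro ⟨q, hq, v, hv⟩
    rw [NFA.mem_stepSet] at hq
    obtain ⟨r, ⟨y, hwy, hry⟩, hq⟩ := hq
    refine ⟨y ++ [a] ++ v, ?_, ?_⟩
    · have : (w ++ [a]).Sublist (y ++ [a]) := hwy.append (List.Sublist.refl [a])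
      exact this.trans (List.sublist_append_left _ v)
    · rw [evalFrom_append, mem_evalFrom_iff]
      refine ⟨q, ?_, hv⟩
      rw [NFA.evalFrom_append, NFA.evalFrom_singleton, NFA.mem_stepSet]
      exact ⟨r, hry, hq⟩

lemma E_subset (w : List α) : E M q₀ w ⊆ R M {q₀} := by
  rintro p ⟨y, _, hy⟩; exact ⟨q₀, rfl, y, hy⟩

lemma R_E_subset (w : List α) : R M (E M q₀ w) ⊆ E M q₀ w := by
  rintro p ⟨q, ⟨y, hwy, hqy⟩, v, hv⟩
  refine ⟨y ++ v, hwy.trans (List.sublist_append_left y v), ?_⟩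
  rw [evalFrom_append, mem_evalFrom_iff]
  exact ⟨q, hqy, hv⟩

/-- Good state sets for the downward-closure DFA. -/
def Good (X : Set σ) : Prop := X.Nonempty ∧ X ⊆ R M {q₀} ∧ R M X ⊆ X

lemma good_mem_start {X : Set σ} (h : Good M q₀ X) (hq : q₀ ∈ X) : X = R M {q₀} := by
  refine Subset.antisymm h.2.1 ?_
  calc R M {q₀} ⊆ R M X := R_mono M (by simpa using hq)
  _ ⊆ X := h.2.2

lemma good_D₀ : Good M q₀ (R M {q₀}) :=
  ⟨⟨q₀, subset_R M _ rfl⟩, Subset.rfl, R_R M _⟩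

lemma good_E {w : List α} (h : (E M q₀ w).Nonempty) : Good M q₀ (E M q₀ w) :=
  ⟨h, E_subset M q₀ w, R_E_subset M q₀ w⟩

/-- The downward-closure DFA. -/
def N : NFA α {X : Set σ // Good M q₀ X} where
  step S a := {T | (T : Set σ) = R M (M.stepSet S.1 a)}
  start := {T | (T : Set σ) = R M {q₀}}
  accept := {T | ∃ q ∈ (T : Set σ), q ∈ M.accept}

lemma N_eval (w : List α) : (N M q₀).eval w = {T : {X : Set σ // Good M q₀ X} | (T : Set σ) = E M q₀ w} := by
  induction w using List.reverseRecOn with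
  | nil =>
    show (N M q₀).start = _
    rw [E_nil]; rfl
  | append_singleton w a ih =>
    rw [NFA.eval_append_singleton, ih, E_key]
    ext T'
    simp only [NFA.mem_stepSet, mem_setOf_eq]
    constructor
    · rintro ⟨T, hT, hT'⟩
      replace hT' : (T' : Set σ) = R M (M.stepSet T.1 a) := hT'
      rw [hT', hT]
    · intro hT'
      have hne : (E M q₀ w).Nonempty := by
        by_contra hemp
        rw [Set.not_nonempty_iff_eq_empty] at hemp
        rw [hemp] at hT'
        simp at hT'
        exact T'.2.1.ne_empty hT'
      refine ⟨⟨E M q₀ w, good_E M q₀ hne⟩, rfl, ?_⟩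
      exact hT'

lemma N_det : (N M q₀).Deterministic := by
  constructor
  · refine ⟨⟨R M {q₀}, good_D₀ M q₀⟩, ?_⟩
    ext T
    simp only [N, mem_setOf_eq, mem_singleton_iff]
    exact ⟨fun h => Subtype.ext h, fun h => by rw [h]⟩
  · intro q a T₁ h₁ T₂ h₂
    exact Subtype.ext (h₁.trans h₂.symm)

lemma N_accepts (hstart : M.start = {q₀}) :
    (N M q₀).accepts = downClosure M.accepts := by
  ext w
  rw [NFA.mem_accepts]
  constructor
  · rintro ⟨T, hTacc, hTev⟩
    have := N_eval M q₀ w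
    rw [show (N M q₀).evalFrom (N M q₀).start w = (N M q₀).eval w from rfl, this,
      mem_setOf_eq] at hTev
    obtain ⟨q, hq, hqacc⟩ := hTacc
    rw [hTev] at hq
    obtain ⟨y, hwy, hqy⟩ := hq
    refine ⟨y, ⟨q, hqacc, ?_⟩, hwy⟩
    show q ∈ M.evalFrom M.start y
    rwa [hstart]
  · rintro ⟨y, ⟨q, hqacc, hqy⟩, hwy⟩
    rw [show M.eval y = M.evalFrom M.start y from rfl, hstart] at hqy
    have hqE : q ∈ E M q₀ w := ⟨y, hwy, hqy⟩
    refine ⟨⟨E M q₀ w, good_E M q₀ ⟨q, hqE⟩⟩, ⟨q, hqE, hqacc⟩, ?_⟩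
    rw [show (N M q₀).evalFrom (N M q₀).start w = (N M q₀).eval w from rfl, N_eval]
    rfl

lemma card_good [Fintype σ] :
    Nat.card {X : Set σ // Good M q₀ X} ≤ 2 ^ (Fintype.card σ - 1) := by
  classical
  set ρ := {x : σ // x ≠ q₀}
  have hinj : Function.Injective (fun T : {X : Set σ // Good M q₀ X} =>
      if (T : Set σ) = R M {q₀} then (∅ : Set ρ) else {x : ρ | (x : σ) ∈ (T : Set σ)}) := by
    intro S T h
    simp only at h
    have key : ∀ U : {X : Set σ // Good M q₀ X}, (U : Set σ) ≠ R M {q₀} → q₀ ∉ (U : Set σ) :=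
      fun U hU hq => hU (good_mem_start M q₀ U.2 hq)
    have nonempty_ne : ∀ U : {X : Set σ // Good M q₀ X}, (U : Set σ) ≠ R M {q₀} →
        ({x : ρ | (x : σ) ∈ (U : Set σ)}).Nonempty := by
      intro U hU
      obtain ⟨p, hp⟩ := U.2.1
      have hpq : p ≠ q₀ := fun hpq => key U hU (hpq ▸ hp)
      exact ⟨⟨p, hpq⟩, hp⟩
    by_cases hS : (S : Set σ) = R M {q₀} <;> by_cases hT : (T : Set σ) = R M {q₀}
    · exact Subtype.ext (hS.trans hT.symm)
    · rw [if_pos hS, if_neg hT] at h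
      exact absurd h.symm (nonempty_ne T hT).ne_empty
    · rw [if_neg hS, if_pos hT] at h
      exact absurd h (nonempty_ne S hS).ne_empty
    · rw [if_neg hS, if_neg hT] at h
      refine Subtype.ext ?_
      ext p
      by_cases hpq : p = q₀
      · subst hpq
        simp [key S hS, key T hT]
      · have := Set.ext_iff.mp h ⟨p, hpq⟩
        simpa using this
  calc Nat.card {X : Set σ // Good M q₀ X} ≤ Nat.card (Set ρ) :=
        Nat.card_le_card_of_injective _ hinj
    _ = 2 ^ (Fintype.card σ - 1) := by
        rw [Nat.card_eq_fintype_card, Fintype.card_set]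
        congr 1
        rw [show (Fintype.card ρ) = Fintype.card {x : σ // ¬ x = q₀} from rfl,
          Fintype.card_subtype_compl, Fintype.card_subtype_eq]

end DownAux

/-- Upper bound on the state complexity of downward closure: if `L` is recognized
by an NFA with `n` states and a single initial state, then `nD(↓L) ≤ 2^(n-1)`. -/
theorem nD_downClosure_le {α σ : Type} [Fintype α] [Fintype σ] (M : NFA α σ) (n : ℕ)
    (hcard : Fintype.card σ = n) (q₀ : σ) (hstart : M.start = {q₀}) :
    nD (downClosure M.accepts) ≤ 2 ^ (n - 1) := by
  classical
  subst hcard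
  letI instτ : Fintype {X : Set σ // DownAux.Good M q₀ X} := Fintype.ofFinite _
  have hmem : Nat.card {X : Set σ // DownAux.Good M q₀ X} ∈
      {n | ∃ (σ' : Type) (inst : Fintype σ') (M' : NFA α σ'),
        M'.Deterministic ∧ @Fintype.card σ' inst = n ∧ M'.accepts = downClosure M.accepts} := by
    refine ⟨{X : Set σ // DownAux.Good M q₀ X}, instτ, DownAux.N M q₀,
      DownAux.N_det M q₀, ?_, DownAux.N_accepts M q₀ hstart⟩
    exact (Nat.card_eq_fintype_card).symm
  exact le_trans (Nat.sInf_le hmem) (DownAux.card_good M q₀)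
end

section
/- For every n ≥ 1, over the alphabet Σ_n = {a_1,…,a_n}, the downward-closed language Σ_n* \ U_n of all words that do not use all n letters is recognized by an NFA with n states (so nN(Σ_n* \ U_n) ≤ n), while every unambiguous finite automaton recognizing it has at least 2^n − 1 states; in fact nU(Σ_n* \ U_n) = nD(Σ_n* \ U_n) = 2^n − 1. -/
open scoped Classical

namespace UFAProof

section Counting

variable {α σ : Type} [Fintype σ]


variable {α σ : Type} [Fintype σ]

noncomputable def cnt (M : NFA α σ) : σ → List α → σ → ℕ
  | p, [], q => if p = q then 1 else 0
  | p, a :: w, q => ∑ p' : σ, if p' ∈ M.step p a then cnt M p' w q else 0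

@[simp] lemma cnt_nil (M : NFA α σ) (p q : σ) : cnt M p [] q = if p = q then 1 else 0 := rfl

lemma cnt_cons (M : NFA α σ) (p q : σ) (a : α) (w : List α) :
    cnt M p (a :: w) q = ∑ p' : σ, if p' ∈ M.step p a then cnt M p' w q else 0 := rfl

lemma cnt_append (M : NFA α σ) (p q : σ) (x y : List α) :
    cnt M p (x ++ y) q = ∑ m : σ, cnt M p x m * cnt M m y q := by
  induction x generalizing p with
  | nil => simp [Finset.sum_ite_eq, cnt_nil]
  | cons a x ih =>
      simp only [List.cons_append, cnt_cons, ih, Finset.sum_mul, ite_mul, zero_mul]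
      rw [Finset.sum_comm]
      refine Finset.sum_congr rfl fun m _ => ?_
      split <;> simp

lemma mem_evalFrom_iff (M : NFA α σ) (S : Set σ) (w : List α) (q : σ) :
    q ∈ M.evalFrom S w ↔ ∃ p ∈ S, cnt M p w q ≠ 0 := by
  induction w generalizing S with
  | nil =>
      simp only [NFA.evalFrom, List.foldl_nil, cnt_nil]
      constructor
      · intro h; exact ⟨q, h, by simp⟩
      · rintro ⟨p, hp, hc⟩
        by_cases hpq : p = q
        · subst hpq; exact hp
        · simp [hpq] at hc
  | cons a w ih =>
      have : M.evalFrom S (a :: w) = M.evalFrom (M.stepSet S a) w := rfl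
      rw [this, ih]
      constructor
      · rintro ⟨p', hp', hc⟩
        rw [NFA.mem_stepSet] at hp'
        obtain ⟨p, hp, hstep⟩ := hp'
        refine ⟨p, hp, ?_⟩
        rw [cnt_cons]
        intro h
        rw [Finset.sum_eq_zero_iff] at h
        have := h p' (Finset.mem_univ _)
        rw [if_pos hstep] at this
        exact hc this
      · rintro ⟨p, hp, hc⟩
        rw [cnt_cons] at hc
        obtain ⟨p', _, h⟩ := Finset.exists_ne_zero_of_sum_ne_zero hc
        by_cases hstep : p' ∈ M.step p a
        · rw [if_pos hstep] at h
          exact ⟨p', NFA.mem_stepSet.2 ⟨p, hp, hstep⟩, h⟩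
        · rw [if_neg hstep] at h; exact absurd rfl h

/-- Number of accepting runs of `M` on `w`. -/
noncomputable def accCnt (M : NFA α σ) (w : List α) : ℕ :=
  ∑ p : σ, if p ∈ M.start then
    (∑ q : σ, if q ∈ M.accept then cnt M p w q else 0) else 0

lemma mem_accepts_iff_accCnt (M : NFA α σ) (w : List α) :
    w ∈ M.accepts ↔ accCnt M w ≠ 0 := by
  rw [NFA.mem_accepts]
  unfold accCnt
  constructor
  · rintro ⟨q, hq, hev⟩
    rw [mem_evalFrom_iff] at hev
    obtain ⟨p, hp, hc⟩ := hev
    intro h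
    rw [Finset.sum_eq_zero_iff] at h
    have h1 := h p (Finset.mem_univ _)
    rw [if_pos hp, Finset.sum_eq_zero_iff] at h1
    have h2 := h1 q (Finset.mem_univ _)
    rw [if_pos hq] at h2
    exact hc h2
  · intro h
    obtain ⟨p, _, hp⟩ := Finset.exists_ne_zero_of_sum_ne_zero h
    by_cases hps : p ∈ M.start
    · rw [if_pos hps] at hp
      obtain ⟨q, _, hq⟩ := Finset.exists_ne_zero_of_sum_ne_zero hp
      by_cases hqa : q ∈ M.accept
      · rw [if_pos hqa] at hq
        exact ⟨q, hqa, (mem_evalFrom_iff M _ w q).2 ⟨p, hps, hq⟩⟩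
      · rw [if_neg hqa] at hq; exact absurd rfl hq
    · rw [if_neg hps] at hp; exact absurd rfl hp

def IsRunFrom (M : NFA α σ) (p q : σ) (w : List α) (r : Fin (w.length + 1) → σ) : Prop :=
  r 0 = p ∧ r (Fin.last w.length) = q ∧
    ∀ i : Fin w.length, r i.succ ∈ M.step (r i.castSucc) (w.get i)

omit [Fintype σ] in
lemma isRunFrom_cons_iff (M : NFA α σ) (p q : σ) (a : α) (w : List α)
    (r : Fin (w.length + 1 + 1) → σ) :
    IsRunFrom M p q (a :: w) r ↔
      r 0 = p ∧ r 1 ∈ M.step p a ∧ IsRunFrom M (r 1) q w (Fin.tail r) := by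
  constructor
  · rintro ⟨h0, hl, hs⟩
    have hs' : ∀ i : Fin (w.length + 1),
        r i.succ ∈ M.step (r i.castSucc) ((a :: w).get i) := fun i => hs i
    have hl' : r (Fin.last (w.length + 1)) = q := hl
    refine ⟨h0, ?_, rfl, ?_, fun i => ?_⟩
    · have := hs' 0
      rwa [Fin.castSucc_zero, h0, Fin.succ_zero_eq_one, List.get_cons_zero] at this
    · show r (Fin.last w.length).succ = q
      rw [Fin.succ_last]
      exact hl'
    · have := hs' i.succ
      show r i.succ.succ ∈ M.step (r i.succ.castSucc) (w.get i)
      rwa [List.get_cons_succ'] at this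
  · rintro ⟨h0, h1, ht0, htl, hts⟩
    refine ⟨h0, ?_, ?_⟩
    · show r (Fin.last (w.length + 1)) = q
      rw [← Fin.succ_last]
      exact htl
    · intro i
      have hi : ∀ j : Fin (w.length + 1),
          r j.succ ∈ M.step (r j.castSucc) ((a :: w).get j) := by
        intro j
        refine Fin.cases ?_ ?_ j
        · rw [Fin.castSucc_zero, h0, Fin.succ_zero_eq_one, List.get_cons_zero]
          exact h1
        · intro k
          have := hts k
          rw [← Fin.succ_castSucc, List.get_cons_succ']
          exact this
      exact hi i

lemma runs_cons_card (M : NFA α σ) (p q : σ) (a : α) (w : List α) :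
    Nat.card {r : Fin ((a :: w).length + 1) → σ // IsRunFrom M p q (a :: w) r} =
      Nat.card (Σ p' : {p' : σ // p' ∈ M.step p a},
        {r : Fin (w.length + 1) → σ // IsRunFrom M p' q w r}) := by
  refine Nat.card_congr (Equiv.ofBijective
    (fun r => ⟨⟨r.1 1, (((isRunFrom_cons_iff M p q a w r.1).1 r.2).2).1⟩,
      ⟨Fin.tail r.1, (((isRunFrom_cons_iff M p q a w r.1).1 r.2).2).2⟩⟩) ⟨?_, ?_⟩)
  · intro r r' hrr
    have htail : Fin.tail r.1 = Fin.tail r'.1 :=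
      congrArg (fun z : (Σ p' : {p' : σ // p' ∈ M.step p a},
        {r : Fin (w.length + 1) → σ // IsRunFrom M p' q w r}) => z.2.1) hrr
    apply Subtype.ext
    have e0 : r.1 0 = r'.1 0 := r.2.1.trans r'.2.1.symm
    rw [← Fin.cons_self_tail (r.1 : Fin (w.length + 1 + 1) → σ),
      ← Fin.cons_self_tail (r'.1 : Fin (w.length + 1 + 1) → σ), htail, e0]
  · rintro ⟨⟨p', hp'⟩, ⟨s, hrun⟩⟩
    have h1 : (Fin.cons p s : Fin (w.length + 1 + 1) → σ) 1 = s 0 := by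
      rw [← Fin.succ_zero_eq_one, Fin.cons_succ]
    have h0 : s 0 = p' := hrun.1
    have hbig : IsRunFrom M p q (a :: w) (Fin.cons p s) := by
      rw [isRunFrom_cons_iff]
      refine ⟨by simp, ?_, ?_⟩
      · rw [h1, h0]; exact hp'
      · rw [h1, h0, Fin.tail_cons]
        exact hrun
    refine ⟨⟨Fin.cons p s, hbig⟩, ?_⟩
    refine Sigma.ext (Subtype.ext (h1.trans h0)) ?_
    refine (Subtype.heq_iff_coe_eq ?_).2 ?_
    · intro r
      show IsRunFrom M ((Fin.cons p s : Fin (w.length + 1 + 1) → σ) 1) q w r ↔ _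
      rw [h1.trans h0]
    · show Fin.tail (Fin.cons p s : Fin (w.length + 1 + 1) → σ) = s
      rw [Fin.tail_cons]

lemma card_runs (M : NFA α σ) (p q : σ) (w : List α) :
    Nat.card {r : Fin (w.length + 1) → σ // IsRunFrom M p q w r} = cnt M p w q := by
  induction w generalizing p with
  | nil =>
      by_cases hpq : p = q
      · subst hpq
        have : Unique {r : Fin 1 → σ // IsRunFrom M p p [] r} := by
          refine ⟨⟨⟨fun _ => p, rfl, rfl, fun i => i.elim0⟩⟩, ?_⟩
          rintro ⟨r, h0, hl, _⟩
          ext i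
          have : i = 0 := Subsingleton.elim _ _
          simp [this, h0]
        simp [cnt, Nat.card_unique]
      · have : IsEmpty {r : Fin 1 → σ // IsRunFrom M p q [] r} := by
          constructor
          rintro ⟨r, h0, hl, _⟩
          exact hpq ((h0.symm.trans (show r 0 = r (Fin.last 0) from rfl)).trans hl)
        simp [cnt, hpq]
  | cons a w ih =>
      rw [runs_cons_card]
      show Nat.card _ = ∑ p' : σ, if p' ∈ M.step p a then cnt M p' w q else 0
      letI : ∀ p' : {p' : σ // p' ∈ M.step p a},
        Fintype {r : Fin (w.length + 1) → σ // IsRunFrom M p' q w r} := fun _ => Fintype.ofFinite _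
      letI : Fintype {p' : σ // p' ∈ M.step p a} := Fintype.ofFinite _
      rw [Nat.card_eq_fintype_card, Fintype.card_sigma]
      calc ∑ i : {p' : σ // p' ∈ M.step p a}, Fintype.card
              {r : Fin (w.length + 1) → σ // IsRunFrom M i.1 q w r}
          = ∑ i : {p' : σ // p' ∈ M.step p a}, cnt M i.1 w q :=
            Finset.sum_congr rfl fun p' _ => by rw [← ih p'.1, Nat.card_eq_fintype_card]
        _ = ∑ p' ∈ Finset.univ.filter (fun x => x ∈ M.step p a), cnt M p' w q :=
            (Finset.sum_subtype (Finset.univ.filter (fun x => x ∈ M.step p a))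
              (fun x => by simp) (fun p' => cnt M p' w q)).symm
        _ = ∑ p' : σ, if p' ∈ M.step p a then cnt M p' w q else 0 := Finset.sum_filter _ _

lemma card_accRuns (M : NFA α σ) (w : List α) :
    Nat.card {r : Fin (w.length + 1) → σ // M.IsAcceptingRun w r} = accCnt M w := by
  have e : Nat.card {r : Fin (w.length + 1) → σ // M.IsAcceptingRun w r} =
      Nat.card (Σ p : {p : σ // p ∈ M.start}, Σ q : {q : σ // q ∈ M.accept},
        {r : Fin (w.length + 1) → σ // IsRunFrom M p q w r}) := by
    refine Nat.card_congr (Equiv.ofBijective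
      (fun r => ⟨⟨r.1 0, r.2.1⟩, ⟨r.1 (Fin.last w.length), r.2.2.1⟩, ⟨r.1, rfl, rfl, r.2.2.2⟩⟩)
      ⟨?_, ?_⟩)
    · intro r r' h
      have : r.1 = r'.1 :=
        congrArg (fun z : (Σ p : {p : σ // p ∈ M.start}, Σ q : {q : σ // q ∈ M.accept},
          {r : Fin (w.length + 1) → σ // IsRunFrom M p q w r}) => z.2.2.1) h
      exact Subtype.ext this
    · rintro ⟨⟨p, hp⟩, ⟨q, hq⟩, ⟨r, hrun⟩⟩
      have h0' : r 0 = p := hrun.1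
      have hl' : r (Fin.last w.length) = q := hrun.2.1
      subst h0'; subst hl'
      exact ⟨⟨r, hp, hq, hrun.2.2⟩, rfl⟩
  rw [e]
  letI i1 : Fintype {p : σ // p ∈ M.start} := Fintype.ofFinite _
  letI i2 : Fintype {q : σ // q ∈ M.accept} := Fintype.ofFinite _
  letI i3 : ∀ (p q : σ), Fintype {r : Fin (w.length + 1) → σ // IsRunFrom M p q w r} :=
    fun _ _ => Fintype.ofFinite _
  rw [Nat.card_eq_fintype_card, Fintype.card_sigma]
  unfold accCnt
  calc ∑ p : {p : σ // p ∈ M.start}, Fintype.card (Σ q : {q : σ // q ∈ M.accept},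
          {r : Fin (w.length + 1) → σ // IsRunFrom M p q w r})
      = ∑ p : {p : σ // p ∈ M.start},
          (∑ q : σ, if q ∈ M.accept then cnt M p.1 w q else 0) := by
        refine Finset.sum_congr rfl fun p _ => ?_
        rw [Fintype.card_sigma]
        calc ∑ q : {q : σ // q ∈ M.accept}, Fintype.card
                {r : Fin (w.length + 1) → σ // IsRunFrom M p.1 q.1 w r}
            = ∑ q : {q : σ // q ∈ M.accept}, cnt M p.1 w q.1 :=
              Finset.sum_congr rfl fun q _ => by
                rw [← card_runs M p.1 q.1 w, Nat.card_eq_fintype_card]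
          _ = ∑ q ∈ Finset.univ.filter (fun x => x ∈ M.accept), cnt M p.1 w q :=
              (Finset.sum_subtype (Finset.univ.filter (fun x => x ∈ M.accept))
                (fun x => by simp) (fun q => cnt M p.1 w q)).symm
          _ = ∑ q : σ, if q ∈ M.accept then cnt M p.1 w q else 0 := Finset.sum_filter _ _
    _ = ∑ p ∈ Finset.univ.filter (fun x => x ∈ M.start),
          (∑ q : σ, if q ∈ M.accept then cnt M p w q else 0) :=
        (Finset.sum_subtype (Finset.univ.filter (fun x => x ∈ M.start))
          (fun x => by simp) (fun p => ∑ q : σ, if q ∈ M.accept then cnt M p w q else 0)).symm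
    _ = ∑ p : σ, if p ∈ M.start then
          (∑ q : σ, if q ∈ M.accept then cnt M p w q else 0) else 0 := Finset.sum_filter _ _

lemma accCnt_le_one_of_unambiguous (M : NFA α σ) (hM : M.Unambiguous) (w : List α) :
    accCnt M w ≤ 1 := by
  rw [← card_accRuns]
  letI : Fintype {r : Fin (w.length + 1) → σ // M.IsAcceptingRun w r} := Fintype.ofFinite _
  rw [Nat.card_eq_fintype_card]
  rw [Fintype.card_le_one_iff_subsingleton]
  constructor
  rintro ⟨r, hr⟩ ⟨r', hr'⟩
  exact Subtype.ext (hM w r r' hr hr')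

lemma accCnt_eq_ite (M : NFA α σ) (hM : M.Unambiguous) (w : List α) :
    accCnt M w = if w ∈ M.accepts then 1 else 0 := by
  by_cases h : w ∈ M.accepts
  · rw [if_pos h]
    have h1 := (mem_accepts_iff_accCnt M w).1 h
    have h2 := accCnt_le_one_of_unambiguous M hM w
    omega
  · rw [if_neg h]
    by_contra hc
    exact h ((mem_accepts_iff_accCnt M w).2 hc)


end Counting


variable {n : ℕ}

noncomputable def Zmat (n : ℕ) : Matrix (Finset (Fin n)) (Finset (Fin n)) ℚ :=
  Matrix.of fun S T => if T ⊆ S then 1 else 0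

noncomputable def Mmat (n : ℕ) : Matrix (Finset (Fin n)) (Finset (Fin n)) ℚ :=
  Matrix.of fun T U => if U ⊆ T then (-1 : ℚ) ^ (T \ U).card else 0

lemma Zmat_mul_Mmat (n : ℕ) : Zmat n * Mmat n = 1 := by
  ext S U
  rw [Matrix.mul_apply, Matrix.one_apply]
  have step1 : ∀ T : Finset (Fin n), Zmat n S T * Mmat n T U =
      if T ∈ S.powerset then (if U ⊆ T then (-1 : ℚ) ^ (T \ U).card else 0) else 0 := by
    intro T
    simp only [Zmat, Mmat, Matrix.of_apply, Finset.mem_powerset]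
    split <;> simp
  rw [Finset.sum_congr rfl (fun T _ => step1 T), ← Finset.sum_filter, ← Finset.sum_filter]
  by_cases hUS : U ⊆ S
  · have key : ∑ T ∈ (Finset.univ.filter (· ∈ S.powerset)).filter (U ⊆ ·),
        (-1 : ℚ) ^ (T \ U).card = ∑ R ∈ (S \ U).powerset, (-1 : ℚ) ^ R.card := by
      refine Finset.sum_bij' (fun T _ => T \ U) (fun R _ => U ∪ R) ?_ ?_ ?_ ?_ ?_
      · intro T hT
        simp only [Finset.mem_filter, Finset.mem_powerset] at hT ⊢
        exact Finset.sdiff_subset_sdiff hT.1.2 (le_refl U)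
      · intro R hR
        simp only [Finset.mem_powerset] at hR
        simp only [Finset.mem_filter, Finset.mem_powerset, Finset.mem_univ, true_and]
        constructor
        · exact Finset.union_subset hUS (hR.trans (Finset.sdiff_subset))
        · exact Finset.subset_union_left
      · intro T hT
        simp only [Finset.mem_filter] at hT
        exact Finset.union_sdiff_of_subset hT.2
      · intro R hR
        simp only [Finset.mem_powerset] at hR
        refine Finset.union_sdiff_cancel_left ?_
        exact Finset.disjoint_left.2 fun a haU haR => (Finset.mem_sdiff.1 (hR haR)).2 haU
      · intro T hT
        rfl
    rw [key]
    have cast_key : ∑ R ∈ (S \ U).powerset, (-1 : ℚ) ^ R.card =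
        ((∑ R ∈ (S \ U).powerset, (-1 : ℤ) ^ R.card : ℤ) : ℚ) := by
      push_cast
      rfl
    rw [cast_key, Finset.sum_powerset_neg_one_pow_card]
    by_cases hSU : S = U
    · rw [if_pos hSU, if_pos (by rw [hSU, Finset.sdiff_self])]
      norm_num
    · rw [if_neg hSU, if_neg ?_]
      · norm_num
      · intro h
        exact hSU (Finset.Subset.antisymm (Finset.sdiff_eq_empty_iff_subset.1 h) hUS)
  · rw [if_neg (show ¬S = U from fun h => hUS (by rw [h])), Finset.sum_eq_zero]
    intro T hT
    simp only [Finset.mem_filter, Finset.mem_powerset] at hT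
    exact absurd (hT.2.trans hT.1.2) hUS

lemma rank_Zmat (n : ℕ) : (Zmat n).rank = 2 ^ n := by
  haveI : Invertible (Zmat n) := invertibleOfRightInverse _ _ (Zmat_mul_Mmat n)
  rw [Matrix.rank_of_isUnit _ (isUnit_of_invertible _)]
  rw [Fintype.card_finset, Fintype.card_fin]

noncomputable def Bmat (n : ℕ) : Matrix (Finset (Fin n)) (Finset (Fin n)) ℚ :=
  Matrix.of fun S T => if S ∪ T = Finset.univ then 1 else 0

def complE (n : ℕ) : Finset (Fin n) ≃ Finset (Fin n) :=
  ⟨fun S => Sᶜ, fun S => Sᶜ, fun S => compl_compl S, fun S => compl_compl S⟩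

lemma union_eq_univ_iff (S T : Finset (Fin n)) : S ∪ T = Finset.univ ↔ Tᶜ ⊆ S := by
  constructor
  · intro h a ha
    rw [Finset.mem_compl] at ha
    have : a ∈ S ∪ T := h ▸ Finset.mem_univ a
    rcases Finset.mem_union.1 this with h' | h'
    · exact h'
    · exact absurd h' ha
  · intro h
    ext a
    simp only [Finset.mem_union, Finset.mem_univ, iff_true]
    by_cases haT : a ∈ T
    · exact Or.inr haT
    · exact Or.inl (h (Finset.mem_compl.2 haT))

lemma Bmat_eq (n : ℕ) : Bmat n = (Zmat n).submatrix (Equiv.refl _) (complE n) := by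
  ext S T
  show (if S ∪ T = Finset.univ then (1 : ℚ) else 0) = if Tᶜ ⊆ S then (1 : ℚ) else 0
  by_cases h : Tᶜ ⊆ S
  · rw [if_pos ((union_eq_univ_iff S T).2 h), if_pos h]
  · rw [if_neg (fun hc => h ((union_eq_univ_iff S T).1 hc)), if_neg h]

lemma rank_Bmat (n : ℕ) : (Bmat n).rank = 2 ^ n := by
  rw [Bmat_eq, Matrix.rank_submatrix, rank_Zmat]

lemma matrix_rank_add_le {m m' : Type} [Fintype m] [Fintype m'] (A B : Matrix m m' ℚ) :
    (A + B).rank ≤ A.rank + B.rank := by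
  have h : LinearMap.range (A + B).mulVecLin ≤
      LinearMap.range A.mulVecLin ⊔ LinearMap.range B.mulVecLin := by
    rw [Matrix.mulVecLin_add]
    intro x hx
    obtain ⟨v, rfl⟩ := hx
    exact Submodule.mem_sup.2 ⟨A.mulVecLin v, ⟨v, rfl⟩, B.mulVecLin v, ⟨v, rfl⟩, rfl⟩
  calc (A + B).rank ≤ Module.finrank ℚ
        (LinearMap.range A.mulVecLin ⊔ LinearMap.range B.mulVecLin : Submodule ℚ (m → ℚ)) :=
        Submodule.finrank_mono h
    _ ≤ A.rank + B.rank := Submodule.finrank_add_le_finrank_add_finrank _ _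

lemma matrix_rank_neg {m m' : Type} [Fintype m] [Fintype m'] (A : Matrix m m' ℚ) :
    (-A).rank = A.rank := by
  have h : (-A).mulVecLin = -A.mulVecLin := by
    apply LinearMap.ext
    intro v
    simp [Matrix.mulVecLin_apply, Matrix.neg_mulVec]
  unfold Matrix.rank
  rw [h, LinearMap.range_neg]


section LowerBound

variable {σ : Type} [Fintype σ]
lemma exists_not_mem_toList_append (S T : Finset (Fin n)) :
    (∃ a : Fin n, a ∉ S.toList ++ T.toList) ↔ S ∪ T ≠ Finset.univ := by
  constructor
  · rintro ⟨a, ha⟩ h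
    rw [List.mem_append] at ha
    push_neg at ha
    have : a ∈ S ∪ T := h ▸ Finset.mem_univ a
    rcases Finset.mem_union.1 this with h' | h'
    · exact ha.1 (Finset.mem_toList.2 h')
    · exact ha.2 (Finset.mem_toList.2 h')
  · intro h
    have : ∃ a : Fin n, a ∉ S ∪ T := by
      by_contra hc
      push_neg at hc
      exact h (Finset.eq_univ_iff_forall.2 hc)
    obtain ⟨a, ha⟩ := this
    rw [Finset.mem_union] at ha
    push_neg at ha
    exact ⟨a, by
      rw [List.mem_append]
      push_neg
      exact ⟨fun hc => ha.1 (Finset.mem_toList.1 hc), fun hc => ha.2 (Finset.mem_toList.1 hc)⟩⟩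

lemma ufa_lower_bound (n : ℕ) (σ : Type) [Fintype σ] (M : NFA (Fin n) σ)
    (hU : M.Unambiguous) (hacc : M.accepts = {x | ∃ a : Fin n, a ∉ x}) :
    2 ^ n - 1 ≤ Fintype.card σ := by
  set Umat : Matrix (Finset (Fin n)) σ ℚ :=
    Matrix.of fun S q => ∑ p : σ, if p ∈ M.start then (cnt M p S.toList q : ℚ) else 0 with hUdef
  set Vmat : Matrix σ (Finset (Fin n)) ℚ :=
    Matrix.of fun q T => ∑ q' : σ, if q' ∈ M.accept then (cnt M q T.toList q' : ℚ) else 0 with hVdef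
  have hUV : ∀ S T : Finset (Fin n),
      (Umat * Vmat) S T = (accCnt M (S.toList ++ T.toList) : ℚ) := by
    intro S T
    rw [Matrix.mul_apply]
    unfold accCnt
    push_cast
    simp only [hUdef, hVdef, Matrix.of_apply, Finset.sum_mul, Finset.mul_sum, ite_mul, mul_ite,
      zero_mul, mul_zero, ite_zero_mul_ite_zero]
    have hca : ∀ (p q' : σ), (cnt M p (S.toList ++ T.toList) q' : ℚ) =
        ∑ m : σ, (cnt M p S.toList m : ℚ) * (cnt M m T.toList q' : ℚ) := by
      intro p q'
      rw [cnt_append]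
      push_cast
      rfl
    simp only [hca]
    set G : σ → σ → σ → ℚ := fun p q' m =>
      (if p ∈ M.start then 1 else 0) * ((if q' ∈ M.accept then 1 else 0) *
        ((cnt M p S.toList m : ℚ) * (cnt M m T.toList q' : ℚ))) with hGdef
    have hL : (∑ m : σ, ∑ q' : σ, if q' ∈ M.accept then
          (∑ p : σ, if p ∈ M.start then
            (cnt M p S.toList m : ℚ) * (cnt M m T.toList q' : ℚ) else 0)
        else 0) = ∑ m : σ, ∑ q' : σ, ∑ p : σ, G p q' m := by
      refine Finset.sum_congr rfl fun m _ => Finset.sum_congr rfl fun q' _ => ?_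
      simp only [hGdef]
      split_ifs with h
      · refine Finset.sum_congr rfl fun p _ => ?_
        split_ifs <;> simp [h]
      · exact (Finset.sum_eq_zero fun p _ => by simp [h]).symm
    have hR : (∑ p : σ, if p ∈ M.start then
          (∑ q' : σ, if q' ∈ M.accept then
            (∑ m : σ, (cnt M p S.toList m : ℚ) * (cnt M m T.toList q' : ℚ)) else 0)
        else 0) = ∑ p : σ, ∑ q' : σ, ∑ m : σ, G p q' m := by
      refine Finset.sum_congr rfl fun p _ => ?_
      simp only [hGdef]
      split_ifs with h
      · refine Finset.sum_congr rfl fun q' _ => ?_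
        split_ifs with h2 <;> simp [h, h2]
      · exact (Finset.sum_eq_zero fun q' _ => Finset.sum_eq_zero fun m _ => by simp [h]).symm
    rw [hL, hR]
    calc ∑ m : σ, ∑ q' : σ, ∑ p : σ, G p q' m
        = ∑ m : σ, ∑ p : σ, ∑ q' : σ, G p q' m :=
          Finset.sum_congr rfl fun m _ => Finset.sum_comm
      _ = ∑ p : σ, ∑ m : σ, ∑ q' : σ, G p q' m := Finset.sum_comm
      _ = ∑ p : σ, ∑ q' : σ, ∑ m : σ, G p q' m :=
          Finset.sum_congr rfl fun p _ => Finset.sum_comm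
  have hacc' : ∀ S T : Finset (Fin n),
      (S.toList ++ T.toList ∈ M.accepts) ↔ S ∪ T ≠ Finset.univ := by
    intro S T
    rw [hacc]
    exact exists_not_mem_toList_append S T
  have hA : Umat * Vmat = Matrix.of fun S T : Finset (Fin n) =>
      if S ∪ T = Finset.univ then (0 : ℚ) else 1 := by
    ext S T
    rw [hUV S T, accCnt_eq_ite M hU]
    by_cases h : S ∪ T = Finset.univ
    · rw [if_neg (fun hc => (hacc' S T).1 hc h)]
      simp [h]
    · rw [if_pos ((hacc' S T).2 h)]
      simp [h]
  have hB : Bmat n = (Matrix.of fun _ _ => (1 : ℚ)) + (-(Umat * Vmat)) := by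
    rw [hA]
    ext S T
    simp only [Bmat, Matrix.of_apply, Matrix.add_apply, Matrix.neg_apply]
    split_ifs <;> norm_num
  have hrankJ : (Matrix.of fun (_ _ : Finset (Fin n)) => (1 : ℚ)).rank ≤ 1 := by
    have hfac : (Matrix.of fun (_ _ : Finset (Fin n)) => (1 : ℚ)) =
        (Matrix.of fun (_ : Finset (Fin n)) (_ : Unit) => (1 : ℚ)) *
          (Matrix.of fun (_ : Unit) (_ : Finset (Fin n)) => (1 : ℚ)) := by
      ext S T
      rw [Matrix.mul_apply]
      simp
    rw [hfac]
    refine le_trans (Matrix.rank_mul_le_left _ _) ?_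
    have := Matrix.rank_le_card_width
      (Matrix.of fun (_ : Finset (Fin n)) (_ : Unit) => (1 : ℚ))
    simpa using this
  have h1 : (2 : ℕ) ^ n = (Bmat n).rank := (rank_Bmat n).symm
  have h2 : (Bmat n).rank ≤ 1 + (Umat * Vmat).rank := by
    rw [hB]
    refine le_trans (matrix_rank_add_le _ _) ?_
    rw [matrix_rank_neg]
    exact add_le_add hrankJ le_rfl
  have h3 : (Umat * Vmat).rank ≤ Fintype.card σ :=
    le_trans (Matrix.rank_mul_le_left _ _) (Matrix.rank_le_card_width _)
  omega

end LowerBound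
lemma unambiguous_of_deterministic {α σ : Type*} (M : NFA α σ) (hD : M.Deterministic) :
    M.Unambiguous := by
  obtain ⟨⟨q₀, hq₀⟩, hstep⟩ := hD
  intro w r₁ r₂ h₁ h₂
  obtain ⟨hs₁, -, ht₁⟩ := h₁
  obtain ⟨hs₂, -, ht₂⟩ := h₂
  funext i
  induction i using Fin.induction with
  | zero =>
      rw [hq₀] at hs₁ hs₂
      rw [hs₁, hs₂]
  | succ j ih =>
      exact hstep (r₁ j.castSucc) (w.get j) (ht₁ j) (ih ▸ ht₂ j)

/-- The `n`-state NFA for the complement of `U_n`. -/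
def NnNFA (n : ℕ) : NFA (Fin n) (Fin n) where
  step := fun q b => if b = q then ∅ else {q}
  start := Set.univ
  accept := Set.univ

lemma NnNFA_evalFrom (n : ℕ) (w : List (Fin n)) (S : Set (Fin n)) (q : Fin n) :
    q ∈ (NnNFA n).evalFrom S w ↔ q ∈ S ∧ ∀ a ∈ w, a ≠ q := by
  induction w generalizing S with
  | nil => simp [NFA.evalFrom]
  | cons a w ih =>
      have h1 : (NnNFA n).evalFrom S (a :: w) = (NnNFA n).evalFrom ((NnNFA n).stepSet S a) w :=
        rfl
      rw [h1, ih]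
      have h2 : q ∈ (NnNFA n).stepSet S a ↔ q ∈ S ∧ a ≠ q := by
        rw [NFA.mem_stepSet]
        constructor
        · rintro ⟨p, hp, hq⟩
          simp only [NnNFA] at hq
          split_ifs at hq with h
          · exact absurd hq (Set.notMem_empty q)
          · rw [Set.mem_singleton_iff] at hq
            subst hq
            exact ⟨hp, fun hc => h hc⟩
        · rintro ⟨hq, hne⟩
          refine ⟨q, hq, ?_⟩
          simp only [NnNFA]
          rw [if_neg hne]
          exact Set.mem_singleton q
      rw [h2]
      simp only [List.mem_cons]
      constructor
      · rintro ⟨⟨hS, hne⟩, hall⟩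
        exact ⟨hS, fun b hb => hb.elim (fun h => h ▸ hne) (fun h => hall b h)⟩
      · rintro ⟨hS, hall⟩
        exact ⟨⟨hS, hall a (Or.inl rfl)⟩, fun b hb => hall b (Or.inr hb)⟩

lemma NnNFA_accepts (n : ℕ) : (NnNFA n).accepts = {x : List (Fin n) | ∃ a : Fin n, a ∉ x} := by
  ext w
  rw [NFA.mem_accepts]
  constructor
  · rintro ⟨q, -, hev⟩
    rw [NnNFA_evalFrom] at hev
    exact ⟨q, fun hc => hev.2 q hc rfl⟩
  · rintro ⟨a, ha⟩
    refine ⟨a, Set.mem_univ a, ?_⟩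
    rw [NnNFA_evalFrom]
    exact ⟨Set.mem_univ a, fun b hb hc => ha (hc ▸ hb)⟩

/-- The minimal DFA: states are the proper subsets of `Fin n`. -/
def DnNFA (n : ℕ) (hn : 1 ≤ n) : NFA (Fin n) {S : Finset (Fin n) // S ≠ Finset.univ} where
  step := fun S a => if h : insert a S.1 = Finset.univ then ∅ else {⟨insert a S.1, h⟩}
  start := {⟨∅, fun h => by
    have := h ▸ Finset.mem_univ (⟨0, hn⟩ : Fin n)
    simp at this⟩}
  accept := Set.univ

lemma DnNFA_evalFrom_empty (n : ℕ) (hn : 1 ≤ n) (w : List (Fin n)) :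
    (DnNFA n hn).evalFrom ∅ w = ∅ := by
  induction w with
  | nil => rfl
  | cons a w ih =>
      have h1 : (DnNFA n hn).evalFrom ∅ (a :: w) =
          (DnNFA n hn).evalFrom ((DnNFA n hn).stepSet ∅ a) w := rfl
      rw [h1, NFA.stepSet_empty, ih]

lemma DnNFA_evalFrom (n : ℕ) (hn : 1 ≤ n) (w : List (Fin n)) (S : Finset (Fin n))
    (hS : S ≠ Finset.univ) (T : {S : Finset (Fin n) // S ≠ Finset.univ}) :
    T ∈ (DnNFA n hn).evalFrom {⟨S, hS⟩} w ↔ T.1 = S ∪ w.toFinset := by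
  induction w generalizing S with
  | nil =>
      simp only [NFA.evalFrom, List.foldl_nil, List.toFinset_nil, Finset.union_empty,
        Set.mem_singleton_iff]
      constructor
      · rintro rfl; rfl
      · intro h; exact Subtype.ext h
  | cons a w ih =>
      have h1 : (DnNFA n hn).evalFrom {⟨S, hS⟩} (a :: w) =
          (DnNFA n hn).evalFrom ((DnNFA n hn).stepSet {⟨S, hS⟩} a) w := rfl
      have h2 : (DnNFA n hn).stepSet {⟨S, hS⟩} a = (DnNFA n hn).step ⟨S, hS⟩ a := by
        ext q
        rw [NFA.mem_stepSet]
        simp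
      rw [h1, h2]
      have hto : S ∪ (a :: w).toFinset = insert a S ∪ w.toFinset := by
        ext b
        simp only [Finset.mem_union, List.toFinset_cons, Finset.mem_insert]
        tauto
      rw [hto]
      by_cases h : insert a S = Finset.univ
      · have hstep : (DnNFA n hn).step ⟨S, hS⟩ a = ∅ := by
          simp only [DnNFA]
          rw [dif_pos h]
        rw [hstep, DnNFA_evalFrom_empty]
        simp only [Set.mem_empty_iff_false, false_iff]
        intro hc
        apply T.2
        have : Finset.univ ⊆ T.1 := by
          rw [hc, ← h]
          exact Finset.subset_union_left
        exact Finset.Subset.antisymm (Finset.subset_univ _) this |>.symm ▸ rfl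
      · have hstep : (DnNFA n hn).step ⟨S, hS⟩ a = {⟨insert a S, h⟩} := by
          simp only [DnNFA]
          rw [dif_neg h]
        rw [hstep, ih (insert a S) h]

lemma DnNFA_accepts (n : ℕ) (hn : 1 ≤ n) :
    (DnNFA n hn).accepts = {x : List (Fin n) | ∃ a : Fin n, a ∉ x} := by
  ext w
  rw [NFA.mem_accepts]
  have hstart : (DnNFA n hn).start = {⟨∅, _⟩} := rfl
  constructor
  · rintro ⟨T, -, hev⟩
    rw [hstart, DnNFA_evalFrom] at hev
    rw [Finset.empty_union] at hev
    have : w.toFinset ≠ Finset.univ := hev ▸ T.2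
    obtain ⟨a, ha⟩ : ∃ a : Fin n, a ∉ w.toFinset := by
      by_contra hc
      push_neg at hc
      exact this (Finset.eq_univ_iff_forall.2 hc)
    exact ⟨a, fun hc => ha (List.mem_toFinset.2 hc)⟩
  · rintro ⟨a, ha⟩
    have hne : w.toFinset ≠ Finset.univ := by
      intro h
      exact ha (List.mem_toFinset.1 (h ▸ Finset.mem_univ a))
    refine ⟨⟨w.toFinset, hne⟩, Set.mem_univ _, ?_⟩
    rw [hstart, DnNFA_evalFrom, Finset.empty_union]

lemma DnNFA_deterministic (n : ℕ) (hn : 1 ≤ n) : (DnNFA n hn).Deterministic := by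
  constructor
  · exact ⟨_, rfl⟩
  · intro q a
    simp only [DnNFA]
    split_ifs
    · exact Set.subsingleton_empty
    · exact Set.subsingleton_singleton

lemma card_proper_subsets (n : ℕ) :
    Fintype.card {S : Finset (Fin n) // S ≠ Finset.univ} = 2 ^ n - 1 := by
  have h1 : Fintype.card {S : Finset (Fin n) // S ≠ Finset.univ} =
      Fintype.card (Finset (Fin n)) - Fintype.card {S : Finset (Fin n) // S = Finset.univ} :=
    Fintype.card_subtype_compl _
  rw [h1, Fintype.card_finset, Fintype.card_fin, Fintype.card_subtype_eq]


end UFAProof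

/-- Over `Σ_n = Fin n` (`n ≥ 1`), the downward-closed language `Σ_n* \ U_n` of all
words not using all `n` letters is recognized by an NFA with `n` states, while every
unambiguous automaton recognizing it has at least `2^n - 1` states; in fact
`nU = nD = 2^n - 1`. -/
theorem complement_U_complexity (n : ℕ) (hn : 1 ≤ n) (L : Language (Fin n))
    (hL : L = {x | ∃ a : Fin n, a ∉ x}) :
    nN L ≤ n ∧
    (∀ (σ : Type) [Fintype σ] (M : NFA (Fin n) σ),
      M.Unambiguous → M.accepts = L → 2 ^ n - 1 ≤ Fintype.card σ) ∧
    nU L = 2 ^ n - 1 ∧ nD L = 2 ^ n - 1 := by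
  subst hL
  have hbound : ∀ (σ : Type) [Fintype σ] (M : NFA (Fin n) σ),
      M.Unambiguous → M.accepts = {x | ∃ a : Fin n, a ∉ x} → 2 ^ n - 1 ≤ Fintype.card σ :=
    fun σ _ M hU hacc => UFAProof.ufa_lower_bound n σ M hU hacc
  refine ⟨?_, hbound, ?_, ?_⟩
  · apply Nat.sInf_le
    exact ⟨Fin n, inferInstance, UFAProof.NnNFA n, Fintype.card_fin n, UFAProof.NnNFA_accepts n⟩
  · -- nU
    have hmem : (2 ^ n - 1) ∈ {m | ∃ (σ : Type) (inst : Fintype σ) (M : NFA (Fin n) σ),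
        M.Unambiguous ∧ @Fintype.card σ inst = m ∧
          M.accepts = {x : List (Fin n) | ∃ a : Fin n, a ∉ x}} :=
      ⟨_, inferInstance, UFAProof.DnNFA n hn,
        UFAProof.unambiguous_of_deterministic _ (UFAProof.DnNFA_deterministic n hn),
        UFAProof.card_proper_subsets n, UFAProof.DnNFA_accepts n hn⟩
    refine le_antisymm (Nat.sInf_le hmem) ?_
    obtain ⟨σ, inst, M, hU, hcard, hacc⟩ := Nat.sInf_mem (Set.nonempty_of_mem hmem)
    show 2 ^ n - 1 ≤ sInf _
    calc 2 ^ n - 1 ≤ @Fintype.card σ inst := @hbound σ inst M hU hacc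
      _ = _ := hcard
  · -- nD
    have hmem : (2 ^ n - 1) ∈ {m | ∃ (σ : Type) (inst : Fintype σ) (M : NFA (Fin n) σ),
        M.Deterministic ∧ @Fintype.card σ inst = m ∧
          M.accepts = {x : List (Fin n) | ∃ a : Fin n, a ∉ x}} :=
      ⟨_, inferInstance, UFAProof.DnNFA n hn, UFAProof.DnNFA_deterministic n hn,
        UFAProof.card_proper_subsets n, UFAProof.DnNFA_accepts n hn⟩
    refine le_antisymm (Nat.sInf_le hmem) ?_
    obtain ⟨σ, inst, M, hD, hcard, hacc⟩ := Nat.sInf_mem (Set.nonempty_of_mem hmem)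
    show 2 ^ n - 1 ≤ sInf _
    calc 2 ^ n - 1 ≤ @Fintype.card σ inst :=
          @hbound σ inst M (UFAProof.unambiguous_of_deterministic _ hD) hacc
      _ = _ := hcard
end

section
/- Alphabet size needed for tightness of the downward-closure bound: let n > 2 and let L ⊆ Σ* be a regular language accepted by an NFA with n states having a single initial state. If |Σ| < n − 1, then nD(↓L) < 2^{n−1}. -/
namespace DCAux

variable {α σ : Type} (M : NFA α σ)

/-- one-step reachability relation of the NFA -/
def rel (p q : σ) : Prop := ∃ a, q ∈ M.step p a

/-- reachability closure of a set of states -/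
def cl (S : Set σ) : Set σ := {q | ∃ p ∈ S, Relation.ReflTransGen (rel M) p q}

theorem subset_cl (S : Set σ) : S ⊆ cl M S :=
  fun q hq => ⟨q, hq, Relation.ReflTransGen.refl⟩

theorem cl_mono {S T : Set σ} (h : S ⊆ T) : cl M S ⊆ cl M T :=
  fun q ⟨p, hp, hpq⟩ => ⟨p, h hp, hpq⟩

theorem cl_cl (S : Set σ) : cl M (cl M S) = cl M S := by
  apply Set.Subset.antisymm
  · rintro q ⟨p, ⟨r, hr, hrp⟩, hpq⟩
    exact ⟨r, hr, hrp.trans hpq⟩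
  · exact subset_cl M _

@[simp] theorem cl_empty : cl M (∅ : Set σ) = ∅ := by
  ext q; simp [cl]

theorem stepSet_subset_cl (S : Set σ) (a : α) : M.stepSet S a ⊆ cl M S := by
  intro q hq
  rcases (M.mem_stepSet (s := q) (S := S) (a := a)).1 hq with ⟨p, hp, hstep⟩
  exact ⟨p, hp, Relation.ReflTransGen.single ⟨a, hstep⟩⟩

theorem stepSet_mono {S T : Set σ} (h : S ⊆ T) (a : α) : M.stepSet S a ⊆ M.stepSet T a := by
  intro q hq
  rcases (M.mem_stepSet (s := q) (S := S) (a := a)).1 hq with ⟨p, hp, hstep⟩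
  exact (M.mem_stepSet (s := q) (S := T) (a := a)).2 ⟨p, h hp, hstep⟩

theorem evalFrom_mono {S T : Set σ} (h : S ⊆ T) (x : List α) :
    M.evalFrom S x ⊆ M.evalFrom T x := by
  induction x generalizing S T with
  | nil => exact h
  | cons a x ih => exact ih (stepSet_mono M h a)

/-- the transition function of the (determinized) subword-closure automaton -/
def F (S : Set σ) (a : α) : Set σ := cl M (M.stepSet S a)

theorem F_mono {S T : Set σ} (h : S ⊆ T) (a : α) : F M S a ⊆ F M T a :=
  cl_mono M (stepSet_mono M h a)

/-- iterated transition -/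
def E (S : Set σ) (x : List α) : Set σ := x.foldl (F M) S

@[simp] theorem E_nil (S : Set σ) : E M S [] = S := rfl

theorem E_cons (S : Set σ) (a : α) (x : List α) : E M S (a :: x) = E M (F M S a) x := rfl

theorem E_append (S : Set σ) (x y : List α) : E M S (x ++ y) = E M (E M S x) y := by
  simp [E, List.foldl_append]

theorem E_mono {S T : Set σ} (h : S ⊆ T) (x : List α) : E M S x ⊆ E M T x := by
  induction x generalizing S T with
  | nil => exact h
  | cons a x ih => exact ih (F_mono M h a)

@[simp] theorem E_empty (x : List α) : E M (∅ : Set σ) x = ∅ := by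
  induction x with
  | nil => rfl
  | cons a x ih => rw [E_cons]; simp only [F]; simp [ih]

/-- states co-reachable from the accepting states -/
def fin' : Set σ := {q | ∃ f ∈ M.accept, Relation.ReflTransGen (rel M) q f}

/-- the language accepted from macro-state `S` in the subword-closure DFA -/
def AccL (S : Set σ) : Language α := {x | (E M S x ∩ fin' M).Nonempty}

theorem AccL_empty : AccL M (∅ : Set σ) = (0 : Language α) := by
  ext x; simp [AccL]; exact Set.notMem_empty x

theorem mem_AccL_iff (S : Set σ) (x : List α) :
    x ∈ AccL M S ↔ (E M S x ∩ fin' M).Nonempty := Iff.rfl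

theorem AccL_deriv (S : Set σ) (a : α) (x : List α) :
    (a :: x) ∈ AccL M S ↔ x ∈ AccL M (F M S a) := Iff.rfl

/-- a reflexive-transitive path can be realized by reading some word -/
theorem path_realize {p q : σ} (h : Relation.ReflTransGen (rel M) p q)
    {S : Set σ} (hp : p ∈ S) : ∃ z, q ∈ M.evalFrom S z := by
  induction h with
  | refl => exact ⟨[], hp⟩
  | tail _ hr ih =>
    rcases ih with ⟨z, hz⟩
    rcases hr with ⟨a, ha⟩
    refine ⟨z ++ [a], ?_⟩
    rw [M.evalFrom_append, M.evalFrom_singleton]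
    exact (M.mem_stepSet (a := a)).2 ⟨_, hz, ha⟩

theorem claimA {x y : List α} (h : x.Sublist y) (S : Set σ) :
    cl M (M.evalFrom S y) ⊆ E M (cl M S) x := by
  induction h generalizing S with
  | slnil => exact le_of_eq rfl
  | @cons x y a _ ih =>
    have h1 : cl M (M.stepSet S a) ⊆ cl M S := by
      have := cl_mono M (stepSet_subset_cl M S a)
      rwa [cl_cl] at this
    calc cl M (M.evalFrom S (a :: y)) = cl M (M.evalFrom (M.stepSet S a) y) := rfl
      _ ⊆ E M (cl M (M.stepSet S a)) x := ih _
      _ ⊆ E M (cl M S) x := E_mono M h1 x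
  | @cons_cons x y a _ ih =>
    have h1 : cl M (M.stepSet S a) ⊆ F M (cl M S) a :=
      cl_mono M (stepSet_mono M (subset_cl M S) a)
    calc cl M (M.evalFrom S (a :: y)) = cl M (M.evalFrom (M.stepSet S a) y) := rfl
      _ ⊆ E M (cl M (M.stepSet S a)) x := ih _
      _ ⊆ E M (F M (cl M S) a) x := E_mono M h1 x
      _ = E M (cl M S) (a :: x) := rfl

theorem mem_evalFrom_iff (y : List α) (S : Set σ) (q : σ) :
    q ∈ M.evalFrom S y ↔ ∃ p ∈ S, q ∈ M.evalFrom {p} y := by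
  induction y generalizing S with
  | nil => simp
  | cons a y ih =>
    constructor
    · intro hq
      rcases (ih (M.stepSet S a)).1 hq with ⟨r, hr, hq'⟩
      rcases (M.mem_stepSet (s := r) (S := S) (a := a)).1 hr with ⟨p, hp, hstep⟩
      refine ⟨p, hp, ?_⟩
      show q ∈ M.evalFrom (M.stepSet {p} a) y
      exact (ih _).2 ⟨r, (M.mem_stepSet (s := r) (S := {p}) (a := a)).2 ⟨p, rfl, hstep⟩, hq'⟩
    · rintro ⟨p, hp, hq⟩
      have hq' : q ∈ M.evalFrom (M.stepSet {p} a) y := hq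
      exact evalFrom_mono M (stepSet_mono M (by simpa using hp) a) y hq'

theorem claimB (x : List α) (S : Set σ) (q : σ) (hq : q ∈ E M (cl M S) x) :
    ∃ y, x.Sublist y ∧ q ∈ M.evalFrom S y := by
  induction x generalizing S with
  | nil =>
    rcases hq with ⟨p, hp, hpq⟩
    rcases path_realize M hpq hp with ⟨z, hz⟩
    exact ⟨z, List.nil_sublist z, hz⟩
  | cons a x ih =>
    rw [E_cons] at hq
    have hF : F M (cl M S) a = cl M (M.stepSet (cl M S) a) := rfl
    rw [hF] at hq
    rcases ih (M.stepSet (cl M S) a) hq with ⟨y, hxy, hy⟩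
    rcases (mem_evalFrom_iff M y _ q).1 hy with ⟨p', hp', hq'⟩
    rcases (M.mem_stepSet (s := p') (a := a)).1 hp' with ⟨p, hp, hstep⟩
    rcases hp with ⟨p₀, hp₀, hpath⟩
    rcases path_realize M hpath hp₀ with ⟨z, hz⟩
    refine ⟨z ++ a :: y, (hxy.cons₂ a).trans (List.sublist_append_right z (a :: y)), ?_⟩
    have heq : M.evalFrom S (z ++ a :: y) = M.evalFrom (M.stepSet (M.evalFrom S z) a) y := by
      rw [show z ++ a :: y = (z ++ [a]) ++ y by simp]
      rw [show M.evalFrom S ((z ++ [a]) ++ y) = M.evalFrom (M.evalFrom S (z ++ [a])) y from by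
        simp [NFA.evalFrom, List.foldl_append]]
      rw [M.evalFrom_append, M.evalFrom_singleton]
    rw [heq]
    exact evalFrom_mono M
      (Set.singleton_subset_iff.2 ((M.mem_stepSet (a := a)).2 ⟨p, hz, hstep⟩)) y hq'

theorem correctness (q₀ : σ) (hstart : M.start = {q₀}) :
    downClosure M.accepts = AccL M (cl M {q₀}) := by
  ext x
  constructor
  · rintro ⟨y, hy, hxy⟩
    rcases (M.mem_accepts).1 hy with ⟨f, hf, hev⟩
    rw [hstart] at hev
    refine ⟨f, ?_, ⟨f, hf, Relation.ReflTransGen.refl⟩⟩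
    exact claimA M hxy {q₀} (subset_cl M _ hev)
  · rintro ⟨q, hqE, f, hf, hpath⟩
    rcases claimB M x {q₀} q hqE with ⟨y, hxy, hy⟩
    rcases path_realize M hpath (Set.mem_singleton q) with ⟨z, hz⟩
    have hz' : f ∈ M.evalFrom (M.evalFrom {q₀} y) z :=
      evalFrom_mono M (by simpa using hy) z hz
    have : f ∈ M.evalFrom {q₀} (y ++ z) := by
      rw [show M.evalFrom {q₀} (y ++ z) = M.evalFrom (M.evalFrom {q₀} y) z from by
        simp [NFA.evalFrom, List.foldl_append]]
      exact hz'
    refine ⟨y ++ z, ?_, hxy.trans (List.sublist_append_left y z)⟩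
    rw [M.mem_accepts, hstart]
    exact ⟨f, hf, this⟩

/-! ### The reachable macro-states and the quotient DFA -/

/-- initial macro-state -/
def S0 (q₀ : σ) : Set σ := cl M {q₀}

/-- reachable macro-states -/
def Reach (q₀ : σ) : Set (Set σ) := Set.range (E M (S0 M q₀))

theorem cl_S0 (q₀ : σ) : cl M (S0 M q₀) = S0 M q₀ := cl_cl M _

theorem q0_mem_S0 (q₀ : σ) : q₀ ∈ S0 M q₀ := subset_cl M _ rfl

theorem S0_mem_Reach (q₀ : σ) : S0 M q₀ ∈ Reach M q₀ := ⟨[], rfl⟩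

theorem E_mem_Reach (q₀ : σ) (x : List α) : E M (S0 M q₀) x ∈ Reach M q₀ := ⟨x, rfl⟩

theorem F_subset_of_closed {S : Set σ} (h : cl M S = S) (a : α) : F M S a ⊆ S := by
  have h1 : M.stepSet S a ⊆ cl M S := stepSet_subset_cl M S a
  have := cl_mono M h1
  rw [cl_cl, h] at this
  exact this

theorem E_invariant (x : List α) (S : Set σ) (h : cl M S = S) :
    cl M (E M S x) = E M S x ∧ E M S x ⊆ S := by
  induction x generalizing S with
  | nil => exact ⟨h, le_of_eq rfl⟩
  | cons a x ih =>
    rw [E_cons]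
    have hF : cl M (F M S a) = F M S a := cl_cl M _
    rcases ih (F M S a) hF with ⟨h1, h2⟩
    exact ⟨h1, h2.trans (F_subset_of_closed M h a)⟩

theorem reach_spec {q₀ : σ} {S : Set σ} (hS : S ∈ Reach M q₀) :
    cl M S = S ∧ S ⊆ S0 M q₀ := by
  rcases hS with ⟨x, rfl⟩
  exact E_invariant M x _ (cl_S0 M q₀)

theorem reach_eq_S0 {q₀ : σ} {S : Set σ} (hS : S ∈ Reach M q₀) (h : q₀ ∈ S) :
    S = S0 M q₀ := by
  rcases reach_spec M hS with ⟨hcl, hsub⟩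
  refine Set.Subset.antisymm hsub ?_
  have : cl M {q₀} ⊆ cl M S := cl_mono M (Set.singleton_subset_iff.2 h)
  rwa [hcl] at this

/-- word derivative of a language -/
def deriv (ℓ : Language α) (a : α) : Language α := {x | a :: x ∈ ℓ}

theorem deriv_AccL (S : Set σ) (a : α) : deriv (AccL M S) a = AccL M (F M S a) := rfl

theorem deriv_zero (a : α) : deriv (0 : Language α) a = 0 := by
  ext x; exact Iff.rfl

/-- the set of languages that are the states of the quotient DFA -/
def Vals (q₀ : σ) : Set (Language α) := (AccL M '' Reach M q₀) \ {0}

/-- the quotient DFA for the downward closure -/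
def N (q₀ : σ) : NFA α ↥(Vals M q₀) where
  step := fun ℓ a => {m | (m : Language α) = deriv ℓ.1 a}
  start := {m | (m : Language α) = AccL M (S0 M q₀)}
  accept := {m | [] ∈ (m : Language α)}

theorem N_det (q₀ : σ) (h0 : AccL M (S0 M q₀) ≠ 0) : (N M q₀).Deterministic := by
  constructor
  · refine ⟨⟨AccL M (S0 M q₀), ⟨S0 M q₀, S0_mem_Reach M q₀, rfl⟩, h0⟩, ?_⟩
    ext m
    simp only [N, Set.mem_setOf_eq, Set.mem_singleton_iff]
    exact ⟨fun h => Subtype.ext h, fun h => by rw [h]⟩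
  · intro q a m hm m' hm'
    exact Subtype.ext (hm.trans hm'.symm)

theorem N_eval (q₀ : σ) (x : List α) :
    (N M q₀).evalFrom (N M q₀).start x
      = {m : ↥(Vals M q₀) | (m : Language α) = AccL M (E M (S0 M q₀) x)} := by
  induction x using List.reverseRecOn with
  | nil => rfl
  | append_singleton x a ih =>
    rw [NFA.evalFrom_append, NFA.evalFrom_singleton, ih]
    by_cases hz : AccL M (E M (S0 M q₀) x) = 0
    · have h1 : {m : ↥(Vals M q₀) | (m : Language α) = AccL M (E M (S0 M q₀) x)} = ∅ := by
        ext m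
        simp only [Set.mem_setOf_eq, Set.mem_empty_iff_false, iff_false]
        intro h
        exact m.2.2 (by rw [← hz]; exact h)
      rw [h1, NFA.stepSet_empty]
      ext m
      simp only [Set.mem_setOf_eq, Set.mem_empty_iff_false, false_iff]
      intro h
      apply m.2.2
      rw [h, E_append]
      show AccL M (E M (E M (S0 M q₀) x) [a]) = 0
      have : E M (E M (S0 M q₀) x) [a] = F M (E M (S0 M q₀) x) a := rfl
      rw [this, ← deriv_AccL, hz, deriv_zero]
    · have hmem : AccL M (E M (S0 M q₀) x) ∈ Vals M q₀ :=
        ⟨⟨E M (S0 M q₀) x, E_mem_Reach M q₀ x, rfl⟩, hz⟩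
      have h1 : {m : ↥(Vals M q₀) | (m : Language α) = AccL M (E M (S0 M q₀) x)}
          = {(⟨_, hmem⟩ : ↥(Vals M q₀))} := by
        ext m
        simp only [Set.mem_setOf_eq, Set.mem_singleton_iff]
        exact ⟨fun h => Subtype.ext h, fun h => by rw [h]⟩
      rw [h1]
      have hd : deriv (AccL M (E M (S0 M q₀) x)) a = AccL M (E M (S0 M q₀) (x ++ [a])) := by
        rw [deriv_AccL, E_append]; rfl
      ext m
      rw [NFA.mem_stepSet]
      simp only [Set.mem_singleton_iff, Set.mem_setOf_eq]
      constructor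
      · rintro ⟨t, ht, hm⟩
        subst ht
        have hm' : (m : Language α) = deriv (AccL M (E M (S0 M q₀) x)) a := hm
        exact hm'.trans hd
      · intro h
        exact ⟨_, rfl, show (m : Language α) = deriv (AccL M (E M (S0 M q₀) x)) a from
          h.trans hd.symm⟩

theorem N_accepts (q₀ : σ) : (N M q₀).accepts = AccL M (S0 M q₀) := by
  ext x
  rw [NFA.mem_accepts, N_eval]
  constructor
  · rintro ⟨m, hacc, hm⟩
    have hm' : (m : Language α) = AccL M (E M (S0 M q₀) x) := hm
    have hnil : [] ∈ AccL M (E M (S0 M q₀) x) := by rw [← hm']; exact hacc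
    rcases hnil with ⟨q, hq, hfin⟩
    exact ⟨q, hq, hfin⟩
  · intro hx
    rcases hx with ⟨q, hq, hfin⟩
    have hnil : [] ∈ AccL M (E M (S0 M q₀) x) := ⟨q, hq, hfin⟩
    have hz : AccL M (E M (S0 M q₀) x) ≠ 0 := by
      intro h
      rw [h] at hnil
      exact Set.notMem_empty _ hnil
    have hmem : AccL M (E M (S0 M q₀) x) ∈ Vals M q₀ :=
      ⟨⟨E M (S0 M q₀) x, E_mem_Reach M q₀ x, rfl⟩, hz⟩
    exact ⟨⟨_, hmem⟩, hnil, rfl⟩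

/-! ### Counting -/

theorem ncard_powerset {τ : Type} [Fintype τ] (W : Set τ) :
    (Set.powerset W).ncard = 2 ^ W.ncard := by
  haveI : Fintype ↥W := Fintype.ofFinite _
  calc (Set.powerset W).ncard
      = Nat.card ↥(Set.powerset W) := (Nat.card_coe_set_eq _).symm
    _ = Nat.card (Set ↥W) := Nat.card_congr (Equiv.Set.powerset W)
    _ = Fintype.card (Set ↥W) := Nat.card_eq_fintype_card
    _ = 2 ^ Fintype.card ↥W := Fintype.card_set
    _ = 2 ^ Nat.card ↥W := by rw [Nat.card_eq_fintype_card]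
    _ = 2 ^ W.ncard := by rw [Nat.card_coe_set_eq]

/-- the non-initial reachable macro-states -/
def Reach' (q₀ : σ) : Set (Set σ) :=
  {S | S ∈ Reach M q₀ ∧ S ⊆ S0 M q₀ \ {q₀} ∧ S.Nonempty}

theorem vals_subset (q₀ : σ) :
    Vals M q₀ ⊆ insert (AccL M (S0 M q₀)) (AccL M '' Reach' M q₀) := by
  rintro ℓ ⟨⟨S, hS, rfl⟩, hne⟩
  by_cases hq : q₀ ∈ S
  · rw [reach_eq_S0 M hS hq]
    exact Set.mem_insert _ _
  · refine Set.mem_insert_of_mem _ ⟨S, ⟨hS, ?_, ?_⟩, rfl⟩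
    · intro p hp
      exact ⟨(reach_spec M hS).2 hp, fun h => hq (h ▸ hp)⟩
    · rcases Set.eq_empty_or_nonempty S with rfl | h
      · exact absurd (AccL_empty M) (by simpa using hne)
      · exact h

/-! ### The combinatorial core -/

section Comb

variable [Fintype α] [Fintype σ]

/-- states with an `a`-self-loop -/
def K (a : α) : Set σ := {q | q ∈ M.step q a}

theorem rtg_eq_of_selfloops (W : Set σ)
    (hstep : ∀ q ∈ W, ∀ a, M.step q a ⊆ {q}) {p r : σ}
    (h : Relation.ReflTransGen (rel M) p r) (hp : p ∈ W) : r = p := by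
  induction h with
  | refl => rfl
  | tail hpb hbc ih =>
    rcases ih with rfl
    rcases hbc with ⟨a, ha⟩
    exact hstep _ hp a ha

theorem no_full_reach (n : ℕ) (hn : 2 < n) (hcard : Fintype.card σ = n) (q₀ : σ)
    (halph : Fintype.card α < n - 1) (hS0 : S0 M q₀ = Set.univ)
    (hall : ∀ T : Set σ, T ⊆ Set.univ \ {q₀} → T.Nonempty → T ∈ Reach M q₀) : False := by
  classical
  set W : Set σ := Set.univ \ {q₀} with hW
  -- W has n - 1 elements
  have hWcard : W.ncard = n - 1 := by
    rw [hW, Set.ncard_diff_singleton_of_mem (Set.mem_univ q₀), Set.ncard_univ,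
      Nat.card_eq_fintype_card, hcard]
  -- every singleton in W is reachable, hence closed
  have hsingle : ∀ q ∈ W, cl M {q} = {q} := by
    intro q hq
    have h1 : ({q} : Set σ) ∈ Reach M q₀ := hall _ (Set.singleton_subset_iff.2 hq) ⟨q, rfl⟩
    rcases h1 with ⟨x, hx⟩
    rcases List.eq_nil_or_concat x with rfl | ⟨y, b, rfl⟩
    all_goals try rw [List.concat_eq_append] at hx
    · exfalso
      have : S0 M q₀ = {q} := hx
      rw [hS0] at this
      have hq0 : q₀ ∈ ({q} : Set σ) := this ▸ Set.mem_univ q₀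
      exact hq.2 (by simpa using hq0.symm)
    · rw [E_append] at hx
      have : E M (E M (S0 M q₀) y) [b] = F M (E M (S0 M q₀) y) b := rfl
      rw [this] at hx
      rw [← hx]
      exact cl_cl M _
  -- self-loop structure on W
  have hstep : ∀ q ∈ W, ∀ a, M.step q a ⊆ {q} := by
    intro q hq a
    have h1 : M.step q a ⊆ M.stepSet {q} a := by
      intro r hr
      exact (M.mem_stepSet (s := r) (a := a)).2 ⟨q, rfl, hr⟩
    have h2 := h1.trans (stepSet_subset_cl M {q} a)
    rwa [hsingle q hq] at h2
  -- subsets of W are closed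
  have hclW : ∀ T : Set σ, T ⊆ W → cl M T = T := by
    intro T hT
    refine Set.Subset.antisymm ?_ (subset_cl M T)
    rintro r ⟨p, hp, hpath⟩
    rcases rtg_eq_of_selfloops M W hstep hpath (hT hp) with rfl
    exact hp
  -- stepping within W intersects with K
  have hFW : ∀ T : Set σ, T ⊆ W → ∀ b, F M T b = T ∩ K M b := by
    intro T hT b
    have hss : M.stepSet T b = T ∩ K M b := by
      ext r
      rw [NFA.mem_stepSet]
      constructor
      · rintro ⟨p, hp, hr⟩
        have : r = p := hstep p (hT hp) b hr
        subst this
        exact ⟨hp, hr⟩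
      · rintro ⟨h1, h2⟩
        exact ⟨r, h1, h2⟩
    rw [F, hss, hclW _ (fun r hr => hT hr.1)]
  -- K ∩ W is contained in the first-step set
  have hKJ : ∀ a, K M a ∩ W ⊆ F M (S0 M q₀) a := by
    intro a q hq
    apply subset_cl M
    exact (M.mem_stepSet (s := q) (a := a)).2 ⟨q, by rw [hS0]; trivial, hq.1⟩
  have hFS0 : ∀ a, F M (S0 M q₀) a ⊆ S0 M q₀ := fun a =>
    F_subset_of_closed M (cl_S0 M q₀) a
  -- normal form of reachable sets
  have hform : ∀ x : List α, E M (S0 M q₀) x = S0 M q₀ ∨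
      ∃ (a : α) (w : List α), q₀ ∉ F M (S0 M q₀) a ∧
        E M (S0 M q₀) x = F M (S0 M q₀) a ∩ {q | ∀ b ∈ w, q ∈ K M b} := by
    intro x
    induction x using List.reverseRecOn with
    | nil => exact Or.inl rfl
    | append_singleton x b ih =>
      have hxb : E M (S0 M q₀) (x ++ [b]) = F M (E M (S0 M q₀) x) b := by
        rw [E_append]; rfl
      rcases ih with h | ⟨a, w, ha, hx⟩
      · rw [hxb, h]
        by_cases hq0 : q₀ ∈ F M (S0 M q₀) b
        · left
          refine Set.Subset.antisymm (hFS0 b) ?_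
          have h1 : cl M {q₀} ⊆ cl M (F M (S0 M q₀) b) :=
            cl_mono M (Set.singleton_subset_iff.2 hq0)
          have h2 : cl M (F M (S0 M q₀) b) = F M (S0 M q₀) b := cl_cl M _
          rw [h2] at h1
          exact h1
        · right
          exact ⟨b, [], hq0, by simp⟩
      · right
        refine ⟨a, w ++ [b], ha, ?_⟩
        have hsub : F M (S0 M q₀) a ∩ {q | ∀ b' ∈ w, q ∈ K M b'} ⊆ W := by
          intro r hr
          exact ⟨Set.mem_univ r, fun h => ha (by
            rw [Set.mem_singleton_iff] at h
            exact h ▸ hr.1)⟩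
        rw [hxb, hx, hFW _ hsub b]
        ext r
        simp only [Set.mem_inter_iff, Set.mem_setOf_eq, List.mem_append, List.mem_singleton]
        constructor
        · rintro ⟨⟨h1, h2⟩, h3⟩
          exact ⟨h1, fun b' hb' => hb'.elim (h2 b') (fun h => h ▸ h3)⟩
        · rintro ⟨h1, h2⟩
          exact ⟨⟨h1, fun b' hb' => h2 b' (Or.inl hb')⟩, h2 b (Or.inr rfl)⟩
  -- co-singletons
  have hTinj : ∀ q ∈ W, ∀ q' ∈ W, W \ {q} = W \ {q'} → q = q' := by
    intro q hq q' hq' h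
    by_contra hne
    have : q' ∈ W \ {q} := ⟨hq', fun hh => hne (by simpa using hh.symm)⟩
    rw [h] at this
    exact this.2 rfl
  -- each co-singleton gives a letter
  have hex : ∀ q ∈ W, ∃ c : α, (K M c ∩ W = W \ {q}) ∨
      (q₀ ∉ F M (S0 M q₀) c ∧ F M (S0 M q₀) c = W \ {q}) := by
    intro q hq
    -- W \ {q} is nonempty
    have hne : (W \ {q}).Nonempty := by
      have h3 : 3 ≤ Fintype.card σ := by omega
      have : ∃ r, r ≠ q ∧ r ≠ q₀ := by
        by_contra hcon
        push_neg at hcon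
        have : (Finset.univ : Finset σ) ⊆ {q, q₀} := by
          intro r _
          rcases eq_or_ne r q with rfl | h1
          · simp
          · simp [hcon r h1]
        have h5 := Finset.card_le_card this
        have h2 : ({q, q₀} : Finset σ).card ≤ 2 := Finset.card_insert_le _ _ |>.trans (by simp)
        rw [Finset.card_univ] at h5
        omega
      rcases this with ⟨r, h1, h2⟩
      exact ⟨r, ⟨Set.mem_univ r, by simpa using h2⟩, by simpa using h1⟩
    have hTW : W \ {q} ⊆ Set.univ \ {q₀} := fun r hr => hr.1
    rcases hall _ hTW hne with ⟨x, hx⟩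
    rcases hform x with h | ⟨a, w, ha, hE⟩
    · exfalso
      rw [h, hS0] at hx
      have : q ∈ W \ {q} := by rw [← hx]; exact Set.mem_univ q
      exact this.2 rfl
    · rw [hE] at hx
      have hq_not : q ∉ F M (S0 M q₀) a ∩ {r | ∀ b ∈ w, r ∈ K M b} := by
        rw [hx]; exact fun h => h.2 rfl
      have hJW : F M (S0 M q₀) a ⊆ W :=
        fun r hr => ⟨Set.mem_univ r, fun h => ha ((Set.mem_singleton_iff.1 h) ▸ hr)⟩
      by_cases hqa : q ∈ F M (S0 M q₀) a
      · -- some b ∈ w witnesses q ∉ K b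
        have : ¬ ∀ b ∈ w, q ∈ K M b := fun h => hq_not ⟨hqa, h⟩
        push_neg at this
        rcases this with ⟨b, hbw, hqb⟩
        refine ⟨b, Or.inl ?_⟩
        apply Set.Subset.antisymm
        · rintro r ⟨h1, h2⟩
          exact ⟨h2, fun hh => hqb ((Set.mem_singleton_iff.1 hh) ▸ h1)⟩
        · rintro r hr
          have hr' : r ∈ F M (S0 M q₀) a ∩ {r | ∀ b ∈ w, r ∈ K M b} := by rw [hx]; exact hr
          exact ⟨hr'.2 b hbw, hr.1⟩
      · refine ⟨a, Or.inr ⟨ha, ?_⟩⟩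
        apply Set.Subset.antisymm
        · intro r hr
          exact ⟨hJW hr, fun hh => hqa ((Set.mem_singleton_iff.1 hh) ▸ hr)⟩
        · rintro r hr
          have hr' : r ∈ F M (S0 M q₀) a ∩ {r | ∀ b ∈ w, r ∈ K M b} := by rw [hx]; exact hr
          exact hr'.1
  -- choose letters, get an injection from W into α
  choose f hf using hex
  have hWne : W.Nonempty := by
    rcases Set.eq_empty_or_nonempty W with he | h
    · rw [he] at hWcard
      simp [Set.ncard_empty] at hWcard
      omega
    · exact h
  obtain ⟨qw, hqw⟩ := hWne
  set g : σ → α := fun q => if h : q ∈ W then f q h else f qw hqw with hg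
  have hgspec : ∀ q (hq : q ∈ W), (K M (g q) ∩ W = W \ {q}) ∨
      (q₀ ∉ F M (S0 M q₀) (g q) ∧ F M (S0 M q₀) (g q) = W \ {q}) := by
    intro q hq
    rw [hg]
    simp only [dif_pos hq]
    exact hf q hq
  have hinj : Set.InjOn g W := by
    intro q hq q' hq' hff
    by_contra hne
    have hq'mem : q' ∈ W \ {q} := ⟨hq', fun hh => hne (Set.mem_singleton_iff.1 hh).symm⟩
    have hqmem : q ∈ W \ {q'} := ⟨hq, fun hh => hne (Set.mem_singleton_iff.1 hh)⟩
    rcases hgspec q hq with h1 | ⟨_, h1⟩ <;> rcases hgspec q' hq' with h2 | ⟨_, h2⟩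
    · rw [hff, h2] at h1
      exact hne (hTinj q hq q' hq' h1.symm)
    · -- K (g q) ∩ W = W\{q}, F (g q') = W\{q'}
      have hsub : W \ {q} ⊆ W \ {q'} := by
        rw [← h1, ← h2, hff]
        exact hKJ (g q')
      exact (hsub hq'mem).2 rfl
    · have hsub : W \ {q'} ⊆ W \ {q} := by
        rw [← h2, ← h1, ← hff]
        exact hKJ (g q)
      exact (hsub hqmem).2 rfl
    · rw [hff, h2] at h1
      exact hne (hTinj q hq q' hq' h1.symm)
  have hle : W.ncard ≤ (Set.univ : Set α).ncard :=
    Set.ncard_le_ncard_of_injOn g (fun r _ => Set.mem_univ (g r)) hinj (Set.toFinite _)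
  rw [hWcard, Set.ncard_univ, Nat.card_eq_fintype_card] at hle
  omega

end Comb

theorem main {α σ : Type} [Fintype α] [Fintype σ]
    (n : ℕ) (hn : 2 < n) (M : NFA α σ) (hcard : Fintype.card σ = n)
    (q₀ : σ) (hstart : M.start = {q₀}) (halph : Fintype.card α < n - 1) :
    nD (downClosure M.accepts) < 2 ^ (n - 1) := by
  classical
  have hcorr : downClosure M.accepts = AccL M (S0 M q₀) := correctness M q₀ hstart
  have hpow : 4 ≤ 2 ^ (n - 1) := by
    calc (4 : ℕ) = 2 ^ 2 := by norm_num
      _ ≤ 2 ^ (n - 1) := Nat.pow_le_pow_right (by norm_num) (by omega)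
  by_cases h0 : AccL M (S0 M q₀) = 0
  · -- the downward closure is empty; a one-state DFA works
    set N1 : NFA α PUnit := ⟨fun _ _ => ∅, {PUnit.unit}, ∅⟩ with hN1
    have hdet : N1.Deterministic := by
      refine ⟨⟨PUnit.unit, rfl⟩, fun q a => ?_⟩
      intro x hx
      exact absurd hx (Set.notMem_empty x)
    have hacc : N1.accepts = downClosure M.accepts := by
      ext x
      constructor
      · rintro ⟨f, hf, _⟩
        exact absurd hf (Set.notMem_empty f)
      · intro hx
        rw [hcorr, h0] at hx
        exact absurd hx (Set.notMem_empty x)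
    have hle : nD (downClosure M.accepts) ≤ 1 :=
      Nat.sInf_le ⟨PUnit, inferInstance, N1, hdet, by simp, hacc⟩
    omega
  · -- main case: use the quotient DFA
    have hVfin : (Vals M q₀).Finite :=
      ((Set.toFinite (Reach M q₀)).image (AccL M)).diff
    letI instV : Fintype ↥(Vals M q₀) := hVfin.fintype
    have hle : nD (downClosure M.accepts) ≤ @Fintype.card _ instV :=
      Nat.sInf_le ⟨↥(Vals M q₀), instV, N M q₀, N_det M q₀ h0, rfl,
        by rw [N_accepts]; exact hcorr.symm⟩
    have hcardV : @Fintype.card _ instV = (Vals M q₀).ncard := by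
      rw [← Nat.card_coe_set_eq]
      exact (Nat.card_eq_fintype_card).symm
    set W' : Set σ := S0 M q₀ \ {q₀} with hW'
    have hV1 : (Vals M q₀).ncard ≤ (Reach' M q₀).ncard + 1 := by
      have h1 : (Vals M q₀).ncard
          ≤ (insert (AccL M (S0 M q₀)) (AccL M '' Reach' M q₀)).ncard :=
        Set.ncard_le_ncard (vals_subset M q₀)
          (((Set.toFinite (Reach' M q₀)).image (AccL M)).insert _)
      have h2 := Set.ncard_insert_le (AccL M (S0 M q₀)) (AccL M '' Reach' M q₀)
      have h3 : (AccL M '' Reach' M q₀).ncard ≤ (Reach' M q₀).ncard :=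
        Set.ncard_image_le (Set.toFinite _)
      omega
    have hbound : (Vals M q₀).ncard < 2 ^ (n - 1) := by
      by_cases hS0u : S0 M q₀ = Set.univ
      · by_cases hallc : ∀ T : Set σ, T ⊆ Set.univ \ {q₀} → T.Nonempty → T ∈ Reach M q₀
        · exact (no_full_reach M n hn hcard q₀ halph hS0u hallc).elim
        · push_neg at hallc
          obtain ⟨T, hTW, hTne, hTnr⟩ := hallc
          have hWu : W' = Set.univ \ {q₀} := by rw [hW', hS0u]
          have hR'sub : Reach' M q₀ ⊆ Set.powerset W' \ {∅, T} := by
            rintro S ⟨hSR, hsubW, hSne⟩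
            refine ⟨hsubW, ?_⟩
            intro hmem
            rcases hmem with rfl | h
            · exact hSne.ne_empty rfl
            · rw [Set.mem_singleton_iff] at h
              exact hTnr (h ▸ hSR)
          have hsub2 : ({∅, T} : Set (Set σ)) ⊆ Set.powerset W' := by
            rintro S (rfl | h)
            · exact Set.empty_subset _
            · rw [Set.mem_singleton_iff] at h
              subst h
              rw [Set.mem_powerset_iff, hWu]
              exact hTW
          have hpair : ({∅, T} : Set (Set σ)).ncard = 2 :=
            Set.ncard_pair (fun h => hTne.ne_empty h.symm)
          have hWcard : W'.ncard = n - 1 := by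
            rw [hWu, Set.ncard_diff_singleton_of_mem (Set.mem_univ q₀), Set.ncard_univ,
              Nat.card_eq_fintype_card, hcard]
          have hcount : (Set.powerset W' \ {∅, T}).ncard = 2 ^ (n - 1) - 2 := by
            rw [Set.ncard_diff hsub2, hpair, ncard_powerset, hWcard]
          have h4 : (Reach' M q₀).ncard ≤ 2 ^ (n - 1) - 2 := by
            rw [← hcount]
            exact Set.ncard_le_ncard hR'sub (Set.toFinite _)
          omega
      · have hWle : W'.ncard ≤ n - 2 := by
          have hss : S0 M q₀ ⊂ Set.univ := Set.ssubset_univ_iff.2 hS0u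
          have hlt : (S0 M q₀).ncard < (Set.univ : Set σ).ncard :=
            Set.ncard_lt_ncard hss (Set.toFinite _)
          rw [Set.ncard_univ, Nat.card_eq_fintype_card, hcard] at hlt
          have hWeq : W'.ncard = (S0 M q₀).ncard - 1 := by
            rw [hW', Set.ncard_diff_singleton_of_mem (q0_mem_S0 M q₀)]
          omega
        have hR'sub : Reach' M q₀ ⊆ Set.powerset W' \ {∅} := by
          rintro S ⟨hSR, hsubW, hSne⟩
          exact ⟨hsubW, fun h => hSne.ne_empty (Set.mem_singleton_iff.1 h)⟩
        have hcount : (Set.powerset W' \ {∅}).ncard = 2 ^ W'.ncard - 1 := by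
          rw [Set.ncard_diff (by simp : ({∅} : Set (Set σ)) ⊆ Set.powerset W'),
            Set.ncard_singleton, ncard_powerset]
        have h4 : (Reach' M q₀).ncard ≤ 2 ^ W'.ncard - 1 := by
          rw [← hcount]
          exact Set.ncard_le_ncard hR'sub (Set.toFinite _)
        have h5 : 2 ^ W'.ncard ≤ 2 ^ (n - 2) := Nat.pow_le_pow_right (by norm_num) hWle
        have h6 : 2 ^ (n - 2) < 2 ^ (n - 1) := Nat.pow_lt_pow_right (by norm_num) (by omega)
        have h7 : 1 ≤ 2 ^ W'.ncard := Nat.one_le_two_pow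
        omega
    omega

end DCAux


/-- Alphabet size needed for tightness of the downward-closure bound: if `L` is
accepted by an `n`-state NFA (`n > 2`) with a single initial state over an alphabet
with fewer than `n - 1` letters, then `nD(↓L) < 2^(n-1)`. -/
theorem nD_downClosure_lt_of_small_alphabet {α σ : Type} [Fintype α] [Fintype σ]
    (n : ℕ) (hn : 2 < n) (M : NFA α σ) (hcard : Fintype.card σ = n)
    (q₀ : σ) (hstart : M.start = {q₀}) (halph : Fintype.card α < n - 1) :
    nD (downClosure M.accepts) < 2 ^ (n - 1) :=
  DCAux.main n hn M hcard q₀ hstart halph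
end
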